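/- arXiv:2407.00868 — 6 statements merged into one kernel-verified Lean document; each statement's English description precedes it below -/
import Mathlib

section
/- If β√(a(N)/N) ≤ √(2 ln 2), then E[ max_{v ∈ {0,1}^N} e^{β X_v} ] ≤ 2 e^{β √(2 ln 2 · N · a(N))}. -/
open MeasureTheory ProbabilityTheory Real
open scoped ENNReal NNReal

/-- The CREM energy of a vertex `v` (a list of bits): the sum of the edge variables
along the path from the root to `v`. -/
noncomputable def cremX {Ω : Type*} (Y : List Bool → Ω → ℝ) (v : List Bool) (ω : Ω) : ℝ :=
  ∑ m ∈ Finset.Icc 1 v.length, Y (v.take m) ω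

/-- The CREM partition function at depth `n`. -/
noncomputable def cremZ {Ω : Type*} (Y : List Bool → Ω → ℝ) (β : ℝ) (n : ℕ) (ω : Ω) : ℝ :=
  ∑ f : Fin n → Bool, Real.exp (β * cremX Y (List.ofFn f) ω)

/-- The normalized CREM partition function at depth `n`. -/
noncomputable def cremZhat {Ω : Type*} (a : ℕ → ℝ) (Y : List Bool → Ω → ℝ) (β : ℝ) (n : ℕ)
    (ω : Ω) : ℝ :=
  cremZ Y β n ω / (2 ^ n * Real.exp (β ^ 2 * a n / 2))

/-! ### Auxiliary lemmas on the Gaussian moment generating function -/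

lemma gauss_shift (t : ℝ) {v : ℝ≥0} (hv : v ≠ 0) (x : ℝ) :
    gaussianPDFReal 0 v x * rexp (t * x)
      = rexp (t ^ 2 * v / 2) * gaussianPDFReal (t * v) v x := by
  have hv' : (0:ℝ) < (v:ℝ) := by positivity
  simp only [gaussianPDFReal, sub_zero]
  have key : rexp (-x ^ 2 / (2 * (v:ℝ))) * rexp (t * x)
      = rexp (t ^ 2 * (v:ℝ) / 2) * rexp (-(x - t * (v:ℝ)) ^ 2 / (2 * (v:ℝ))) := by
    rw [← Real.exp_add, ← Real.exp_add]
    congr 1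
    field_simp
    ring
  rw [mul_assoc, key]
  ring

lemma gauss_smul_eq (t : ℝ) (v : ℝ≥0) :
    (fun x => (gaussianPDFReal 0 v x).toNNReal • rexp (t * x))
      = fun x => rexp (t ^ 2 * v / 2) * gaussianPDFReal (t * v) v x := by
  by_cases hv : v = 0
  · funext x
    simp [hv, gaussianPDFReal_zero_var]
  · funext x
    rw [NNReal.smul_def, Real.coe_toNNReal _ (gaussianPDFReal_nonneg 0 v x)]
    exact gauss_shift t hv x

lemma gaussianPDF_eq_coe (v : ℝ≥0) :
    gaussianPDF 0 v = fun x => (((gaussianPDFReal 0 v x).toNNReal : ℝ≥0) : ℝ≥0∞) := rfl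

lemma integrable_exp_mul_gauss (t : ℝ) (v : ℝ≥0) :
    Integrable (fun x => rexp (t * x)) (gaussianReal 0 v) := by
  by_cases hv : v = 0
  · rw [hv, gaussianReal_zero_var]
    exact (integrable_const (rexp (t * 0))).congr (ae_eq_dirac fun x => rexp (t * x)).symm
  · rw [gaussianReal_of_var_ne_zero _ hv, gaussianPDF_eq_coe]
    have h := (integrable_withDensity_iff_integrable_smul
      (μ := (volume : Measure ℝ)) (E := ℝ)
      ((measurable_gaussianPDFReal 0 v).real_toNNReal) (g := fun x => rexp (t * x)))
    refine h.mpr ?_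
    rw [gauss_smul_eq]
    exact (integrable_gaussianPDFReal (t * v) v).const_mul _

lemma integral_exp_mul_gauss (t : ℝ) (v : ℝ≥0) :
    ∫ x, rexp (t * x) ∂(gaussianReal 0 v) = rexp (t ^ 2 * v / 2) := by
  by_cases hv : v = 0
  · rw [hv, gaussianReal_zero_var, integral_dirac]
    simp
  · rw [gaussianReal_of_var_ne_zero _ hv, gaussianPDF_eq_coe,
      integral_withDensity_eq_integral_smul ((measurable_gaussianPDFReal 0 v).real_toNNReal),
      gauss_smul_eq, integral_const_mul, integral_gaussianPDFReal_eq_one _ hv, mul_one]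

/-! ### Telescoping sum -/

lemma telescope_a (a : ℕ → ℝ) (N : ℕ) :
    ∑ m ∈ Finset.Icc 1 N, (a m - a (m - 1)) = a N - a 0 := by
  rw [← Finset.Ico_add_one_right_eq_Icc, Finset.sum_Ico_eq_sum_range]
  have h1 : N + 1 - 1 = N := rfl
  rw [h1]
  have h2 : ∀ i, a (1 + i) - a (1 + i - 1) = a (i + 1) - a i := by
    intro i
    rw [Nat.add_comm 1 i, Nat.add_sub_cancel]
  simp_rw [h2]
  exact Finset.sum_range_sub a N

section crem
variable {Ω : Type*} [MeasurableSpace Ω] {P : Measure Ω} [IsProbabilityMeasure P]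

omit [IsProbabilityMeasure P] in
lemma crem_mgf_edge
    (N : ℕ) (a : ℕ → ℝ)
    (hstep : ∀ m : ℕ, 1 ≤ m → m ≤ N → 0 ≤ a m - a (m - 1))
    (Y : List Bool → Ω → ℝ) (hmeas : ∀ u, Measurable (Y u))
    (hGauss : ∀ u : List Bool, 1 ≤ u.length → u.length ≤ N →
      P.map (Y u) = gaussianReal 0 (Real.toNNReal (a u.length - a (u.length - 1))))
    (t : ℝ) (u : List Bool) (h1 : 1 ≤ u.length) (h2 : u.length ≤ N) :
    mgf (Y u) P t = rexp (t ^ 2 * (a u.length - a (u.length - 1)) / 2)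
      ∧ Integrable (fun ω => rexp (t * Y u ω)) P := by
  have hmap := hGauss u h1 h2
  have hg : AEStronglyMeasurable (fun x : ℝ => rexp (t * x)) (P.map (Y u)) :=
    (Real.measurable_exp.comp (measurable_const_mul t)).aestronglyMeasurable
  constructor
  · rw [mgf, ← integral_map (hmeas u).aemeasurable hg, hmap, integral_exp_mul_gauss,
      Real.coe_toNNReal _ (hstep u.length h1 h2)]
  · exact (integrable_map_measure hg (hmeas u).aemeasurable).mp
      (by rw [hmap]; exact integrable_exp_mul_gauss t _)

lemma crem_mgf_X
    (N : ℕ) (hN : 1 ≤ N) (a : ℕ → ℝ) (ha0 : a 0 = 0)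
    (hstep : ∀ m : ℕ, 1 ≤ m → m ≤ N → 0 ≤ a m - a (m - 1))
    (Y : List Bool → Ω → ℝ) (hmeas : ∀ u, Measurable (Y u))
    (hIndep : iIndepFun
      (fun u : {u : List Bool // 1 ≤ u.length ∧ u.length ≤ N} => Y u.1) P)
    (hGauss : ∀ u : List Bool, 1 ≤ u.length → u.length ≤ N →
      P.map (Y u) = gaussianReal 0 (Real.toNNReal (a u.length - a (u.length - 1))))
    (t : ℝ) (f : Fin N → Bool) :
    mgf (cremX Y (List.ofFn f)) P t = rexp (t ^ 2 * a N / 2)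
      ∧ Integrable (fun ω => rexp (t * cremX Y (List.ofFn f) ω)) P := by
  classical
  set ι := {u : List Bool // 1 ≤ u.length ∧ u.length ≤ N} with hι
  have hlen : ∀ m : ℕ, m ≤ N → ((List.ofFn f).take m).length = m := by
    intro m hm
    simp [List.length_take, min_eq_left hm]
  let g : ℕ → ι := fun m =>
    if h : 1 ≤ m ∧ m ≤ N then
      ⟨(List.ofFn f).take m, by rw [hlen m h.2]; exact h⟩
    else ⟨List.ofFn f, by rw [List.length_ofFn]; exact ⟨hN, le_rfl⟩⟩
  have hgval : ∀ m : ℕ, 1 ≤ m → m ≤ N → (g m).1 = (List.ofFn f).take m := by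
    intro m h1 h2
    simp only [g, dif_pos (And.intro h1 h2)]
  have hglen : ∀ m : ℕ, 1 ≤ m → m ≤ N → (g m).1.length = m := by
    intro m h1 h2
    rw [hgval m h1 h2]; exact hlen m h2
  have hginj : ∀ x ∈ Finset.Icc 1 N, ∀ y ∈ Finset.Icc 1 N, g x = g y → x = y := by
    intro x hx y hy hxy
    rw [Finset.mem_Icc] at hx hy
    have := congrArg (fun u : ι => u.1.length) hxy
    simpa [hglen x hx.1 hx.2, hglen y hy.1 hy.2] using this
  set s : Finset ι := (Finset.Icc 1 N).image g with hs
  have hsum : cremX Y (List.ofFn f) = ∑ u ∈ s, (fun u : ι => Y u.1) u := by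
    funext ω
    rw [Finset.sum_apply]
    rw [hs, Finset.sum_image hginj]
    unfold cremX
    rw [List.length_ofFn]
    refine Finset.sum_congr rfl fun m hm => ?_
    rw [Finset.mem_Icc] at hm
    rw [hgval m hm.1 hm.2]
  have hmeasι : ∀ u : ι, Measurable ((fun u : ι => Y u.1) u) := fun u => hmeas u.1
  have hedge := fun (u : ι) =>
    crem_mgf_edge N a hstep Y hmeas hGauss t u.1 u.2.1 u.2.2
  constructor
  · rw [hsum, iIndepFun.mgf_sum hIndep hmeasι s, hs, Finset.prod_image hginj]
    have : ∀ m ∈ Finset.Icc 1 N,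
        mgf (Y (g m).1) P t = rexp (t ^ 2 * (a m - a (m - 1)) / 2) := by
      intro m hm
      rw [Finset.mem_Icc] at hm
      rw [(hedge (g m)).1, hglen m hm.1 hm.2]
    rw [Finset.prod_congr rfl this, ← Real.exp_sum]
    congr 1
    rw [← Finset.sum_div, ← Finset.mul_sum, telescope_a a N, ha0, sub_zero]
  · have := iIndepFun.integrable_exp_mul_sum hIndep hmeasι
      (s := s) (fun u _ => (hedge u).2)
    rw [hsum]
    exact this

lemma crem_integral_Z
    (N : ℕ) (hN : 1 ≤ N) (a : ℕ → ℝ) (ha0 : a 0 = 0)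
    (hstep : ∀ m : ℕ, 1 ≤ m → m ≤ N → 0 ≤ a m - a (m - 1))
    (Y : List Bool → Ω → ℝ) (hmeas : ∀ u, Measurable (Y u))
    (hIndep : iIndepFun
      (fun u : {u : List Bool // 1 ≤ u.length ∧ u.length ≤ N} => Y u.1) P)
    (hGauss : ∀ u : List Bool, 1 ≤ u.length → u.length ≤ N →
      P.map (Y u) = gaussianReal 0 (Real.toNNReal (a u.length - a (u.length - 1))))
    (t : ℝ) :
    (∫ ω, cremZ Y t N ω ∂P) = 2 ^ N * rexp (t ^ 2 * a N / 2)
      ∧ Integrable (cremZ Y t N) P := by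
  have hX := fun f : Fin N → Bool =>
    crem_mgf_X N hN a ha0 hstep Y hmeas hIndep hGauss t f
  have hint : Integrable (cremZ Y t N) P := by
    unfold cremZ
    exact integrable_finset_sum _ (fun f _ => (hX f).2)
  refine ⟨?_, hint⟩
  unfold cremZ
  rw [integral_finset_sum _ (fun f _ => (hX f).2)]
  have : ∀ f : Fin N → Bool,
      (∫ ω, rexp (t * cremX Y (List.ofFn f) ω) ∂P) = rexp (t ^ 2 * a N / 2) :=
    fun f => (hX f).1
  rw [Finset.sum_congr rfl fun f _ => this f, Finset.sum_const]
  simp [Fintype.card_fun]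

end crem

/-! ### A Jensen-type inequality for the lower integral -/

lemma lintegral_rpow_le_rpow_lintegral
    {Ω : Type*} [MeasurableSpace Ω] (P : Measure Ω) [IsProbabilityMeasure P]
    {F : Ω → ℝ≥0∞} (hF : AEMeasurable F P) {θ : ℝ} (hθ0 : 0 < θ) (hθ1 : θ ≤ 1) :
    ∫⁻ ω, (F ω) ^ θ ∂P ≤ (∫⁻ ω, F ω ∂P) ^ θ := by
  rcases eq_or_lt_of_le hθ1 with h1 | h1
  · subst h1
    simp
  · have hpq : (1 / θ).HolderConjugate (1 / (1 - θ)) := by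
      rw [Real.holderConjugate_iff]; constructor
      · rw [lt_div_iff₀ hθ0]; linarith
      · rw [one_div, one_div, inv_inv, inv_inv]; ring
    have key := ENNReal.lintegral_mul_le_Lp_mul_Lq P hpq
      (f := fun ω => (F ω) ^ θ) (g := fun _ => 1)
      (hF.pow_const θ) aemeasurable_const
    simp only [Pi.mul_apply, mul_one, ENNReal.one_rpow, lintegral_const,
      measure_univ, mul_one, one_mul] at key
    calc ∫⁻ ω, (F ω) ^ θ ∂P ≤ (∫⁻ ω, ((F ω) ^ θ) ^ (1/θ) ∂P) ^ (1 / (1/θ)) := by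
          simpa using key
      _ = (∫⁻ ω, F ω ∂P) ^ θ := by
          rw [one_div_one_div]
          congr 1
          refine lintegral_congr fun ω => ?_
          rw [← ENNReal.rpow_mul, mul_one_div, div_self hθ0.ne', ENNReal.rpow_one]

/-! ### Main auxiliary bound -/

lemma crem_main_aux
    (N : ℕ) (hN : 1 ≤ N) (a : ℕ → ℝ) (ha0 : a 0 = 0)
    (hstep : ∀ m : ℕ, 1 ≤ m → m ≤ N → 0 ≤ a m - a (m - 1))
    {Ω : Type*} [MeasurableSpace Ω] (P : Measure Ω) [IsProbabilityMeasure P]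
    (Y : List Bool → Ω → ℝ) (hmeas : ∀ u, Measurable (Y u))
    (hIndep : iIndepFun
      (fun u : {u : List Bool // 1 ≤ u.length ∧ u.length ≤ N} => Y u.1) P)
    (hGauss : ∀ u : List Bool, 1 ≤ u.length → u.length ≤ N →
      P.map (Y u) = gaussianReal 0 (Real.toNNReal (a u.length - a (u.length - 1))))
    (β b : ℝ) (hβ0 : 0 < β) (hb0 : 0 < b) (hβb : β ≤ b) :
    ∫⁻ ω, ENNReal.ofReal ((Finset.univ : Finset (Fin N → Bool)).sup'
        Finset.univ_nonempty (fun f => Real.exp (β * cremX Y (List.ofFn f) ω))) ∂P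
      ≤ ENNReal.ofReal (rexp ((β / b) * ((N : ℝ) * Real.log 2 + b ^ 2 * a N / 2))) := by
  have hZ := crem_integral_Z N hN a ha0 hstep Y hmeas hIndep hGauss b
  set θ := β / b with hθ
  have hθ0 : 0 < θ := div_pos hβ0 hb0
  have hθ1 : θ ≤ 1 := (div_le_one hb0).mpr hβb
  have hθb : θ * b = β := div_mul_cancel₀ β hb0.ne'
  have hXmeas : ∀ f : Fin N → Bool, Measurable (cremX Y (List.ofFn f)) := by
    intro f; unfold cremX; exact Finset.measurable_sum _ fun m _ => hmeas _
  have hZmeas : Measurable (cremZ Y b N) := by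
    unfold cremZ
    exact Finset.measurable_sum _ fun f _ => (Real.measurable_exp.comp ((hXmeas f).const_mul b))
  have hZpos : ∀ ω, 0 < cremZ Y b N ω := fun ω =>
    Finset.sum_pos (fun f _ => Real.exp_pos _) Finset.univ_nonempty
  have hpt : ∀ ω, ENNReal.ofReal ((Finset.univ : Finset (Fin N → Bool)).sup'
        Finset.univ_nonempty (fun f => Real.exp (β * cremX Y (List.ofFn f) ω)))
      ≤ (ENNReal.ofReal (cremZ Y b N ω)) ^ θ := by
    intro ω
    rw [ENNReal.ofReal_rpow_of_pos (hZpos ω)]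
    refine ENNReal.ofReal_le_ofReal ?_
    refine Finset.sup'_le _ _ fun f _ => ?_
    have h1 : rexp (β * cremX Y (List.ofFn f) ω)
        = (rexp (b * cremX Y (List.ofFn f) ω)) ^ θ := by
      rw [← Real.exp_mul]
      congr 1
      rw [← hθb]; ring
    rw [h1]
    refine Real.rpow_le_rpow (Real.exp_pos _).le ?_ hθ0.le
    exact Finset.single_le_sum (f := fun f => rexp (b * cremX Y (List.ofFn f) ω))
      (fun f _ => (Real.exp_pos _).le) (Finset.mem_univ f)
  calc ∫⁻ ω, ENNReal.ofReal ((Finset.univ : Finset (Fin N → Bool)).sup'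
        Finset.univ_nonempty (fun f => Real.exp (β * cremX Y (List.ofFn f) ω))) ∂P
      ≤ ∫⁻ ω, (ENNReal.ofReal (cremZ Y b N ω)) ^ θ ∂P := lintegral_mono hpt
    _ ≤ (∫⁻ ω, ENNReal.ofReal (cremZ Y b N ω) ∂P) ^ θ :=
        lintegral_rpow_le_rpow_lintegral P (hZmeas.ennreal_ofReal.aemeasurable) hθ0 hθ1
    _ = (ENNReal.ofReal (∫ ω, cremZ Y b N ω ∂P)) ^ θ := by
        rw [ofReal_integral_eq_lintegral_ofReal hZ.2 (ae_of_all _ fun ω => (hZpos ω).le)]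
    _ = ENNReal.ofReal (rexp (θ * ((N : ℝ) * Real.log 2 + b ^ 2 * a N / 2))) := by
        rw [hZ.1]
        have h2 : (2:ℝ) ^ N * rexp (b ^ 2 * a N / 2)
            = rexp ((N : ℝ) * Real.log 2 + b ^ 2 * a N / 2) := by
          rw [Real.exp_add, Real.exp_nat_mul, Real.exp_log two_pos]
        rw [h2, ENNReal.ofReal_rpow_of_pos (Real.exp_pos _)]
        congr 1
        rw [← Real.exp_mul]
        ring_nf

/-- If `β √(a(N)/N) ≤ √(2 ln 2)`, then
`E[max_{v ∈ {0,1}^N} e^{β X_v}] ≤ 2 e^{β √(2 ln 2 · N · a(N))}`. -/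
theorem crem_expected_max_exp_le
    (N : ℕ) (hN : 1 ≤ N) (a : ℕ → ℝ) (ha0 : a 0 = 0)
    (haMono : ∀ ⦃m n : ℕ⦄, m ≤ n → n ≤ N → a m ≤ a n)
    {Ω : Type*} [MeasurableSpace Ω] (P : Measure Ω) [IsProbabilityMeasure P]
    (Y : List Bool → Ω → ℝ) (hmeas : ∀ u, Measurable (Y u))
    (hIndep : iIndepFun
      (fun u : {u : List Bool // 1 ≤ u.length ∧ u.length ≤ N} => Y u.1) P)
    (hGauss : ∀ u : List Bool, 1 ≤ u.length → u.length ≤ N →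
      P.map (Y u) = gaussianReal 0 (Real.toNNReal (a u.length - a (u.length - 1))))
    (β : ℝ) (hβ : 0 < β)
    (hβ2 : β * Real.sqrt (a N / N) ≤ Real.sqrt (2 * Real.log 2)) :
    ∫⁻ ω, ENNReal.ofReal ((Finset.univ : Finset (Fin N → Bool)).sup'
        Finset.univ_nonempty (fun f => Real.exp (β * cremX Y (List.ofFn f) ω))) ∂P
      ≤ ENNReal.ofReal (2 * Real.exp (β * Real.sqrt (2 * Real.log 2 * N * a N))) := by
  have hstep : ∀ m : ℕ, 1 ≤ m → m ≤ N → 0 ≤ a m - a (m - 1) := by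
    intro m h1 h2
    have : a (m - 1) ≤ a m := haMono (Nat.sub_le m 1) h2
    linarith
  have hNR : (1:ℝ) ≤ (N:ℝ) := by exact_mod_cast hN
  have hNpos : (0:ℝ) < (N:ℝ) := by linarith
  have hA : 0 ≤ a N := by
    have := haMono (Nat.zero_le N) le_rfl
    rw [ha0] at this; exact this
  have hlog2 : 0 < Real.log 2 := Real.log_pos one_lt_two
  set c := Real.sqrt (2 * Real.log 2 * N * a N) with hc
  have hcnn : 0 ≤ c := Real.sqrt_nonneg _
  -- choose the auxiliary inverse temperature b
  rcases eq_or_lt_of_le hA with hA0 | hA1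
  · -- case a N = 0
    have hc0 : c = 0 := by rw [hc, ← hA0, mul_zero, Real.sqrt_zero]
    have key := crem_main_aux N hN a ha0 hstep P Y hmeas hIndep hGauss β (β * N)
      hβ (by positivity) (le_mul_of_one_le_right hβ.le hNR)
    refine key.trans (ENNReal.ofReal_le_ofReal ?_)
    have hval : (β / (β * N)) * ((N : ℝ) * Real.log 2 + (β * N) ^ 2 * a N / 2)
        = Real.log 2 := by
      rw [← hA0]
      field_simp
      ring
    rw [hval, hc0, mul_zero, Real.exp_zero, mul_one]
    have : Real.log 2 ≤ Real.log 2 := le_rfl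
    calc rexp (Real.log 2) = 2 := Real.exp_log two_pos
      _ ≤ 2 := le_rfl
  · -- case 0 < a N
    have hc2 : c ^ 2 = 2 * Real.log 2 * N * a N := Real.sq_sqrt (by positivity)
    have hcpos : 0 < c := Real.sqrt_pos.mpr (by positivity)
    set b := c / a N with hb
    have hb0 : 0 < b := div_pos hcpos hA1
    have hβb : β ≤ b := by
      rw [hb, le_div_iff₀ hA1]
      -- from hβ2 : β * √(a N / N) ≤ √(2 log 2)
      have hsq : (β * Real.sqrt (a N / N)) ^ 2 ≤ Real.sqrt (2 * Real.log 2) ^ 2 := by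
        have h0 : 0 ≤ β * Real.sqrt (a N / N) := by positivity
        nlinarith [hβ2]
      rw [mul_pow, Real.sq_sqrt (by positivity : (0:ℝ) ≤ a N / N),
        Real.sq_sqrt (by positivity : (0:ℝ) ≤ 2 * Real.log 2)] at hsq
      -- hsq : β ^ 2 * (a N / N) ≤ 2 * log 2
      have h1 : β ^ 2 * a N ^ 2 ≤ c ^ 2 := by
        rw [hc2]
        have := mul_le_mul_of_nonneg_right hsq (le_of_lt (mul_pos hNpos hA1))
        calc β ^ 2 * a N ^ 2 = β ^ 2 * (a N / N) * (N * a N) := by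
              field_simp
          _ ≤ 2 * Real.log 2 * (N * a N) := this
          _ = 2 * Real.log 2 * N * a N := by ring
      nlinarith [mul_pos hβ hA1, hcpos]
    have key := crem_main_aux N hN a ha0 hstep P Y hmeas hIndep hGauss β b
      hβ hb0 hβb
    refine key.trans (ENNReal.ofReal_le_ofReal ?_)
    have hval : (β / b) * ((N : ℝ) * Real.log 2 + b ^ 2 * a N / 2) = β * c := by
      rw [hb, div_pow]
      have hane : a N ≠ 0 := hA1.ne'
      have hcne : c ≠ 0 := hcpos.ne'
      field_simp
      linear_combination (-1) * hc2
    rw [hval]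
    have h2c : 2 * rexp (β * c) = rexp (Real.log 2 + β * c) := by
      rw [Real.exp_add, Real.exp_log two_pos]
    rw [h2c]
    exact Real.exp_le_exp.mpr (by nlinarith [hlog2])
end

section
/- Suppose β√(a(n)/n) ≤ √(2 ln 2) for every integer 1 ≤ n ≤ N, and for such n set γ₁(n) = β√(2 ln 2 · a(n)/n). Then for every ε > 0 and every integer m ≥ 1: P( there exists n with m ≤ n ≤ N such that max_{|v|=n} e^{β X_v} > e^{(γ₁(n)+ε)·n} ) ≤ (2/ε)·e^{−ε(m−1)}. -/
open MeasureTheory ProbabilityTheory Real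

open scoped NNReal ENNReal

lemma my_pdf_mul_exp (v : ℝ≥0) (hv : v ≠ 0) (t x : ℝ) :
    Real.exp (t * x) * gaussianPDFReal 0 v x
      = Real.exp ((v : ℝ) * t ^ 2 / 2) * gaussianPDFReal (t * v) v x := by
  have hv' : (v : ℝ) ≠ 0 := by exact_mod_cast hv
  simp only [gaussianPDFReal]
  rw [show Real.exp (t*x) * ((√(2 * π * v))⁻¹ * rexp (- (x - 0)^2 / (2 * v)))
      = (√(2 * π * v))⁻¹ * rexp (t*x + (- (x - 0)^2 / (2 * v))) by rw [Real.exp_add]; ring,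
    show Real.exp ((v:ℝ) * t^2/2) * ((√(2 * π * v))⁻¹ * rexp (- (x - t*v)^2 / (2 * v)))
      = (√(2 * π * v))⁻¹ * rexp ((v:ℝ)*t^2/2 + (- (x - t*v)^2 / (2 * v))) by
        rw [Real.exp_add]; ring]
  congr 1
  field_simp
  ring

lemma my_exp_gaussian (v : ℝ≥0) (t : ℝ) :
    Integrable (fun x => Real.exp (t * x)) (gaussianReal 0 v) ∧
    ∫ x, Real.exp (t * x) ∂(gaussianReal 0 v) = Real.exp ((v:ℝ) * t ^ 2 / 2) := by
  by_cases hv : v = 0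
  · subst hv
    rw [gaussianReal_zero_var]
    refine ⟨⟨(Real.measurable_exp.comp
      (measurable_const.mul measurable_id)).aestronglyMeasurable, ?_⟩, ?_⟩
    · rw [HasFiniteIntegral, lintegral_dirac]
      exact ENNReal.coe_lt_top
    · rw [integral_dirac]; simp
  · rw [gaussianReal_of_var_ne_zero 0 hv]
    have hpdf_eq : (gaussianPDF 0 v)
        = fun x => ((Real.toNNReal (gaussianPDFReal 0 v x) : ℝ≥0) : ℝ≥0∞) := rfl
    have hf : AEMeasurable (fun x => Real.toNNReal (gaussianPDFReal 0 v x)) volume :=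
      ((measurable_gaussianPDFReal 0 v).real_toNNReal).aemeasurable
    have hsmul : ∀ x : ℝ, (Real.toNNReal (gaussianPDFReal 0 v x)) • Real.exp (t * x)
        = Real.exp ((v:ℝ) * t^2/2) * gaussianPDFReal (t*v) v x := by
      intro x
      rw [NNReal.smul_def, smul_eq_mul, Real.coe_toNNReal _ (gaussianPDFReal_nonneg 0 v x),
        mul_comm]
      exact my_pdf_mul_exp v hv t x
    constructor
    · rw [hpdf_eq, integrable_withDensity_iff_integrable_smul₀ hf]
      exact ((integrable_gaussianPDFReal (t*v) v).const_mul _).congr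
        (Filter.Eventually.of_forall fun x => (hsmul x).symm)
    · rw [hpdf_eq, integral_withDensity_eq_integral_smul₀ hf]
      simp_rw [hsmul]
      rw [integral_const_mul, integral_gaussianPDFReal_eq_one (t*v) hv, mul_one]

lemma crem_mgf_aux {Ω : Type*} [MeasurableSpace Ω] (P : Measure Ω) [IsProbabilityMeasure P]
    (N : ℕ) (a : ℕ → ℝ) (ha0 : a 0 = 0)
    (haMono : ∀ ⦃m n : ℕ⦄, m ≤ n → n ≤ N → a m ≤ a n)
    (Y : List Bool → Ω → ℝ) (hmeas : ∀ u, Measurable (Y u))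
    (hIndep : iIndepFun
      (fun u : {u : List Bool // 1 ≤ u.length ∧ u.length ≤ N} => Y u.1) P)
    (hGauss : ∀ u : List Bool, 1 ≤ u.length → u.length ≤ N →
      P.map (Y u) = gaussianReal 0 (Real.toNNReal (a u.length - a (u.length - 1))))
    (v : List Bool) (hvN : v.length ≤ N) (t : ℝ) :
    Integrable (fun ω => Real.exp (t * cremX Y v ω)) P ∧
      mgf (cremX Y v) P t = Real.exp (a v.length * t ^ 2 / 2) := by
  classical
  set n := v.length with hn
  have hlen : ∀ k ∈ Finset.Icc 1 n, (v.take k).length = k := by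
    intro k hk
    rw [Finset.mem_Icc] at hk
    rw [List.length_take]
    omega
  let e : {k // k ∈ Finset.Icc 1 n} → {u : List Bool // 1 ≤ u.length ∧ u.length ≤ N} :=
    fun k => ⟨v.take k.1, by
      rw [hlen k.1 k.2]
      have := Finset.mem_Icc.mp k.2
      exact ⟨this.1, le_trans this.2 hvN⟩⟩
  have he_inj : ∀ x ∈ (Finset.Icc 1 n).attach, ∀ y ∈ (Finset.Icc 1 n).attach,
      e x = e y → x = y := by
    intro x _ y _ hxy
    have h := congrArg (fun u => u.1.length) hxy
    simp only [e, hlen x.1 x.2, hlen y.1 y.2] at h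
    exact Subtype.ext h
  set S := (Finset.Icc 1 n).attach.image e with hS
  have hXsum : cremX Y v = ∑ u ∈ S, Y u.1 := by
    funext ω
    rw [Finset.sum_apply, hS, Finset.sum_image he_inj]
    show (∑ m ∈ Finset.Icc 1 n, Y (v.take m) ω) = _
    rw [← Finset.sum_attach (Finset.Icc 1 n) (fun m => Y (v.take m) ω)]
  have hint_each : ∀ u : {u : List Bool // 1 ≤ u.length ∧ u.length ≤ N},
      Integrable (fun ω => Real.exp (t * Y u.1 ω)) P ∧
        mgf (Y u.1) P t = Real.exp ((a u.1.length - a (u.1.length - 1)) * t ^ 2 / 2) := by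
    intro u
    have hmap := hGauss u.1 u.2.1 u.2.2
    have hcoe : ((Real.toNNReal (a u.1.length - a (u.1.length - 1)) : ℝ≥0) : ℝ)
        = a u.1.length - a (u.1.length - 1) :=
      Real.coe_toNNReal _ (sub_nonneg.mpr (haMono (Nat.sub_le _ _) u.2.2))
    have h1 := my_exp_gaussian (Real.toNNReal (a u.1.length - a (u.1.length - 1))) t
    have hmeasg : AEStronglyMeasurable (fun x => Real.exp (t * x))
        (P.map (Y u.1)) :=
      (Real.measurable_exp.comp (measurable_const.mul measurable_id)).aestronglyMeasurable
    have hint : Integrable (fun ω => Real.exp (t * Y u.1 ω)) P := by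
      have h2 := h1.1
      rw [← hmap] at h2
      exact (integrable_map_measure hmeasg (hmeas u.1).aemeasurable).mp h2
    refine ⟨hint, ?_⟩
    have h3 : ∫ x, Real.exp (t*x) ∂(P.map (Y u.1)) = ∫ ω, Real.exp (t * Y u.1 ω) ∂P :=
      integral_map (hmeas u.1).aemeasurable hmeasg
    rw [mgf, ← h3, hmap, h1.2, hcoe]
  constructor
  · have h4 := hIndep.integrable_exp_mul_sum (fun u => hmeas u.1)
      (s := S) (fun u _ => (hint_each u).1)
    rwa [← hXsum] at h4
  · rw [hXsum, hIndep.mgf_sum (fun u => hmeas u.1) S, hS,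
      Finset.prod_image he_inj]
    have hval : ∀ k ∈ (Finset.Icc 1 n).attach,
        mgf (Y (e k).1) P t = Real.exp ((a k.1 - a (k.1 - 1)) * t^2/2) := by
      intro k _
      have h5 := (hint_each (e k)).2
      have h6 : (e k).1.length = k.1 := hlen k.1 k.2
      rw [h5, h6]
    rw [Finset.prod_congr rfl hval, ← Real.exp_sum]
    congr 1
    rw [Finset.sum_attach (Finset.Icc 1 n) (fun k => (a k - a (k-1)) * t^2/2)]
    have htel : ∑ k ∈ Finset.Icc 1 n, (a k - a (k-1)) = a n := by
      rw [← Finset.Ico_add_one_right_eq_Icc, Finset.sum_Ico_eq_sum_range]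
      simp only [Nat.succ_sub_one, Nat.add_sub_cancel]
      have h7 : ∀ i ∈ Finset.range n, a (1 + i) - a (1 + i - 1) = a (i+1) - a i := by
        intro i _
        congr 2 <;> omega
      rw [Finset.sum_congr rfl h7, Finset.sum_range_sub a n, ha0, sub_zero]
    simp only [mul_div_assoc]
    rw [← Finset.sum_mul, htel]

lemma crem_vertex_bound {Ω : Type*} [MeasurableSpace Ω] (P : Measure Ω) [IsProbabilityMeasure P]
    (N : ℕ) (a : ℕ → ℝ) (Y : List Bool → Ω → ℝ) (β : ℝ) (γ₁ : ℕ → ℝ) (ε : ℝ)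
    (ha0 : a 0 = 0)
    (haMono : ∀ ⦃m n : ℕ⦄, m ≤ n → n ≤ N → a m ≤ a n)
    (hβ : 0 < β)
    (hβ2 : ∀ n : ℕ, 1 ≤ n → n ≤ N →
      β * Real.sqrt (a n / n) ≤ Real.sqrt (2 * Real.log 2))
    (hγ₁ : ∀ n : ℕ, γ₁ n = β * Real.sqrt (2 * Real.log 2 * a n / n))
    (hε : 0 < ε)
    (n : ℕ) (hn1 : 1 ≤ n) (hnN : n ≤ N) (v : List Bool) (hvn : v.length = n)
    (hmg : ∀ t : ℝ, Integrable (fun ω => Real.exp (t * cremX Y v ω)) P ∧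
      mgf (cremX Y v) P t = Real.exp (a v.length * t ^ 2 / 2)) :
    P {ω | Real.exp ((γ₁ n + ε) * n) < Real.exp (β * cremX Y v ω)}
      ≤ ENNReal.ofReal (Real.exp (-(Real.log 2) * n - ε * n)) := by
  have hn0 : (0:ℝ) < n := by exact_mod_cast hn1
  have hlog2 : (0:ℝ) < Real.log 2 := Real.log_pos one_lt_two
  have han : 0 ≤ a n := ha0 ▸ haMono (Nat.zero_le n) hnN
  obtain ⟨lam, hlam0, hkey⟩ : ∃ lam : ℝ, 0 ≤ lam ∧
      -lam * ((γ₁ n + ε) * n / β) + a n * lam^2/2 ≤ -(Real.log 2)*n - ε*n := by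
    rcases eq_or_lt_of_le han with h0 | hpos
    · refine ⟨(Real.log 2 + ε) * β / ε, by positivity, ?_⟩
      have hγ : γ₁ n = 0 := by
        rw [hγ₁, ← h0]
        simp
      rw [hγ, ← h0]
      have heq : -((Real.log 2 + ε) * β / ε) * ((0 + ε) * (n:ℝ) / β)
          + 0 * ((Real.log 2 + ε) * β / ε)^2/2 = -(Real.log 2)*n - ε*n := by
        field_simp
        ring
      rw [heq]
    · set lam := Real.sqrt (2 * Real.log 2 * n / a n) with hlam
      have harg : 0 ≤ 2 * Real.log 2 * n / a n := by positivity
      refine ⟨lam, Real.sqrt_nonneg _, ?_⟩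
      have hsq : lam^2 = 2 * Real.log 2 * n / a n := Real.sq_sqrt harg
      have h1 : a n * lam^2/2 = Real.log 2 * n := by
        rw [hsq]
        field_simp
      have h2 : lam * γ₁ n = β * (2 * Real.log 2) := by
        rw [hγ₁]
        have hss : lam * Real.sqrt (2*Real.log 2 * a n/n) = 2*Real.log 2 := by
          rw [hlam, ← Real.sqrt_mul harg]
          have hprod : 2*Real.log 2*(n:ℝ)/a n * (2*Real.log 2 * a n/(n:ℝ))
              = (2*Real.log 2)^2 := by
            field_simp
          rw [hprod, Real.sqrt_sq (by positivity)]
        calc lam * (β * Real.sqrt (2*Real.log 2 * a n/n))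
            = β * (lam * Real.sqrt (2*Real.log 2 * a n/n)) := by ring
          _ = β * (2*Real.log 2) := by rw [hss]
      have h3 : β ≤ lam := by
        have h4 := hβ2 n hn1 hnN
        have hs : 0 < Real.sqrt (a n / n) := Real.sqrt_pos.mpr (by positivity)
        have h5 : β ≤ Real.sqrt (2*Real.log 2) / Real.sqrt (a n / n) :=
          (le_div_iff₀ hs).mpr h4
        refine le_trans h5 (le_of_eq ?_)
        rw [← Real.sqrt_div (by positivity) (a n / n), hlam]
        congr 1
        field_simp
      have h5 : 2*Real.log 2*n + ε*n ≤ lam*((γ₁ n + ε)*n/β) := by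
        have e1 : lam*((γ₁ n + ε)*n/β) = (lam*γ₁ n)*((n:ℝ)/β) + (lam/β)*(ε*n) := by
          ring
        rw [e1, h2]
        have e2 : β*(2*Real.log 2)*((n:ℝ)/β) = 2*Real.log 2*n := by
          field_simp
        rw [e2]
        have h6 : (1:ℝ) ≤ lam/β := (one_le_div hβ).mpr h3
        nlinarith [mul_le_mul_of_nonneg_right h6 (by positivity : (0:ℝ) ≤ ε*(n:ℝ))]
      linarith [h1, h5]
  set t₀ := (γ₁ n + ε) * (n:ℝ) / β with ht₀
  have hsub : {ω | Real.exp ((γ₁ n + ε) * n) < Real.exp (β * cremX Y v ω)}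
      ⊆ {ω | t₀ ≤ cremX Y v ω} := by
    intro ω hω
    have h6 : (γ₁ n + ε) * n < β * cremX Y v ω := Real.exp_lt_exp.mp hω
    rw [Set.mem_setOf_eq, ht₀, div_le_iff₀ hβ]
    nlinarith
  refine le_trans (measure_mono hsub) ?_
  have hch := measure_ge_le_exp_mul_mgf (μ := P) (X := cremX Y v) t₀ hlam0 (hmg lam).1
  rw [(hmg lam).2, hvn] at hch
  have hfin : P {ω | t₀ ≤ cremX Y v ω} ≠ ⊤ := measure_ne_top P _
  calc P {ω | t₀ ≤ cremX Y v ω}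
      = ENNReal.ofReal ((P {ω | t₀ ≤ cremX Y v ω}).toReal) :=
        (ENNReal.ofReal_toReal hfin).symm
    _ ≤ ENNReal.ofReal (Real.exp (-(Real.log 2) * n - ε * n)) := by
        apply ENNReal.ofReal_le_ofReal
        refine le_trans hch ?_
        rw [← Real.exp_add]
        exact Real.exp_le_exp.mpr (by linarith [hkey])

/-- If `β √(a(n)/n) ≤ √(2 ln 2)` for all `1 ≤ n ≤ N`, then for every
`ε > 0` and integer `m ≥ 1`, the probability that some level `n ∈ [m, N]` has a vertex `v`
with `e^{β X_v} > e^{(γ₁(n)+ε)n}`, where `γ₁(n) = β √(2 ln 2 · a(n)/n)`, is at most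
`(2/ε) e^{−ε(m−1)}`. -/
theorem crem_max_large_union_bound
    (N : ℕ) (hN : 1 ≤ N) (a : ℕ → ℝ) (ha0 : a 0 = 0)
    (haMono : ∀ ⦃m n : ℕ⦄, m ≤ n → n ≤ N → a m ≤ a n)
    {Ω : Type*} [MeasurableSpace Ω] (P : Measure Ω) [IsProbabilityMeasure P]
    (Y : List Bool → Ω → ℝ) (hmeas : ∀ u, Measurable (Y u))
    (hIndep : iIndepFun
      (fun u : {u : List Bool // 1 ≤ u.length ∧ u.length ≤ N} => Y u.1) P)
    (hGauss : ∀ u : List Bool, 1 ≤ u.length → u.length ≤ N →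
      P.map (Y u) = gaussianReal 0 (Real.toNNReal (a u.length - a (u.length - 1))))
    (β : ℝ) (hβ : 0 < β)
    (hβ2 : ∀ n : ℕ, 1 ≤ n → n ≤ N →
      β * Real.sqrt (a n / n) ≤ Real.sqrt (2 * Real.log 2))
    (γ₁ : ℕ → ℝ) (hγ₁ : ∀ n : ℕ, γ₁ n = β * Real.sqrt (2 * Real.log 2 * a n / n))
    (ε : ℝ) (hε : 0 < ε) (m : ℕ) (hm : 1 ≤ m) :
    P {ω | ∃ n : ℕ, m ≤ n ∧ n ≤ N ∧
        (Finset.univ : Finset (Fin n → Bool)).sup' Finset.univ_nonempty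
          (fun f => Real.exp (β * cremX Y (List.ofFn f) ω)) >
          Real.exp ((γ₁ n + ε) * n)}
      ≤ ENNReal.ofReal ((2 / ε) * Real.exp (-ε * ((m : ℝ) - 1))) := by
  classical
  have hev : {ω | ∃ n : ℕ, m ≤ n ∧ n ≤ N ∧
        (Finset.univ : Finset (Fin n → Bool)).sup' Finset.univ_nonempty
          (fun f => Real.exp (β * cremX Y (List.ofFn f) ω)) >
          Real.exp ((γ₁ n + ε) * n)}
      = ⋃ n ∈ Finset.Icc m N, ⋃ f ∈ (Finset.univ : Finset (Fin n → Bool)),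
          {ω | Real.exp ((γ₁ n + ε) * n) < Real.exp (β * cremX Y (List.ofFn f) ω)} := by
    ext ω
    simp only [Set.mem_setOf_eq, Set.mem_iUnion, Finset.mem_Icc, Finset.mem_univ,
      exists_prop, true_and, gt_iff_lt, Finset.lt_sup'_iff]
    constructor
    · rintro ⟨n, h1, h2, f, hf⟩
      exact ⟨n, ⟨h1, h2⟩, f, hf⟩
    · rintro ⟨n, ⟨h1, h2⟩, f, hf⟩
      exact ⟨n, h1, h2, f, hf⟩
  rw [hev]
  refine le_trans (measure_biUnion_finset_le _ _) ?_
  have hlevel : ∀ n ∈ Finset.Icc m N,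
      P (⋃ f ∈ (Finset.univ : Finset (Fin n → Bool)),
          {ω | Real.exp ((γ₁ n + ε) * n) < Real.exp (β * cremX Y (List.ofFn f) ω)})
      ≤ ENNReal.ofReal (Real.exp (-ε * n)) := by
    intro n hn
    rw [Finset.mem_Icc] at hn
    refine le_trans (measure_biUnion_finset_le _ _) ?_
    have hvb : ∀ f : Fin n → Bool,
        P {ω | Real.exp ((γ₁ n + ε) * n) < Real.exp (β * cremX Y (List.ofFn f) ω)}
        ≤ ENNReal.ofReal (Real.exp (-(Real.log 2) * n - ε * n)) := by
      intro f
      exact crem_vertex_bound P N a Y β γ₁ ε ha0 haMono hβ hβ2 hγ₁ hε n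
        (le_trans hm hn.1) hn.2 (List.ofFn f) List.length_ofFn
        (fun t => crem_mgf_aux P N a ha0 haMono Y hmeas hIndep hGauss (List.ofFn f)
          (by rw [List.length_ofFn]; exact hn.2) t)
    refine le_trans (Finset.sum_le_sum (fun f _ => hvb f)) ?_
    rw [Finset.sum_const, Finset.card_univ]
    have hcard : Fintype.card (Fin n → Bool) = 2^n := by
      simp [Fintype.card_fun]
    rw [hcard, nsmul_eq_mul]
    have h2n : ((2^n : ℕ) : ℝ≥0∞) = ENNReal.ofReal ((2:ℝ)^n) := by
      rw [ENNReal.ofReal_pow (by norm_num)]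
      simp
    rw [h2n, ← ENNReal.ofReal_mul (by positivity)]
    apply ENNReal.ofReal_le_ofReal
    have he2 : (2:ℝ)^n = Real.exp ((n:ℝ) * Real.log 2) := by
      rw [Real.exp_nat_mul, Real.exp_log (by norm_num : (0:ℝ) < 2)]
    rw [he2, ← Real.exp_add]
    apply le_of_eq
    congr 1
    ring
  refine le_trans (Finset.sum_le_sum hlevel) ?_
  rw [← ENNReal.ofReal_sum_of_nonneg (fun n _ => (Real.exp_pos _).le)]
  apply ENNReal.ofReal_le_ofReal
  set r := Real.exp (-ε) with hrdef
  have hr0 : 0 < r := Real.exp_pos _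
  have hr1 : r < 1 := Real.exp_lt_one_iff.mpr (by linarith)
  have h1r : 0 < 1 - r := by linarith
  have hsum : ∑ n ∈ Finset.Icc m N, Real.exp (-ε * n) ≤ r^m * (1 - r)⁻¹ := by
    have he : ∀ n : ℕ, Real.exp (-ε * n) = r^n := by
      intro n
      rw [mul_comm, Real.exp_nat_mul]
    rw [Finset.sum_congr rfl (fun n _ => he n), ← Finset.Ico_add_one_right_eq_Icc,
      Finset.sum_Ico_eq_sum_range]
    have hp : ∀ i ∈ Finset.range (N + 1 - m), r^(m+i) = r^m * r^i :=
      fun i _ => pow_add r m i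
    rw [Finset.sum_congr rfl hp, ← Finset.mul_sum]
    refine mul_le_mul_of_nonneg_left ?_ (pow_nonneg hr0.le m)
    calc ∑ i ∈ Finset.range (N + 1 - m), r^i
        ≤ ∑' i : ℕ, r^i := Summable.sum_le_tsum _ (fun i _ => pow_nonneg hr0.le i)
          (summable_geometric_of_lt_one hr0.le hr1)
      _ = (1-r)⁻¹ := tsum_geometric_of_lt_one hr0.le hr1
  refine le_trans hsum ?_
  have hrhs : Real.exp (-ε * ((m:ℝ) - 1)) = r^m * Real.exp ε := by
    rw [show (-ε * ((m:ℝ)-1)) = (-ε) * m + ε by ring, Real.exp_add]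
    congr 1
    rw [mul_comm, Real.exp_nat_mul]
  rw [hrhs]
  have hb : Real.exp ε * r = 1 := by
    rw [hrdef, ← Real.exp_add]
    simp
  have hiq : ε ≤ 2 * (Real.exp ε - 1) := by
    nlinarith [Real.add_one_le_exp ε]
  have hkey2 : (1 - r)⁻¹ ≤ 2/ε * Real.exp ε := by
    rw [← one_div, div_le_iff₀ h1r]
    rw [div_mul_eq_mul_div, div_mul_eq_mul_div, le_div_iff₀ hε]
    nlinarith [hb, hiq]
  calc r^m * (1-r)⁻¹ ≤ r^m * (2/ε * Real.exp ε) :=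
        mul_le_mul_of_nonneg_left hkey2 (pow_nonneg hr0.le m)
    _ = 2/ε * (r^m * Real.exp ε) := by ring
end

section
/- Let Δ₁,…,Δₙ ⊆ ℝ be Borel sets with P(ξ_i ∈ Δ_i) > 0 for all i, where ξ_i ~ N(0, a_i s_i), and let η > 0. Then P( #{ v = v₁⋯vₙ (with v_i ∈ {0,1}^{s_i}) : Y_{v₁⋯v_i} ∈ Δ_i for all 1 ≤ i ≤ n } ≤ (1−η)·2^N·∏_{i=1}^n P(ξ_i ∈ Δ_i) ) ≤ (1/η²)·Σ_{j=1}^n 1/∏_{i=1}^j ( 2^{s_i}·P(ξ_i ∈ Δ_i) ). -/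
open MeasureTheory ProbabilityTheory Real

/-- Truncation of a GREM leaf configuration after block `i`: coordinates in blocks `> i`
are replaced by a fixed default value, so that `gremTrunc s i v` records exactly the prefix
`v₁⋯v_i` of `v`. -/
def gremTrunc {n : ℕ} (s : Fin n → ℕ) (i : Fin n) (v : (j : Fin n) → Fin (s j) → Bool) :
    (j : Fin n) → Fin (s j) → Bool :=
  fun j => if j ≤ i then v j else fun _ => false

lemma gremTrunc_idem {n : ℕ} (s : Fin n → ℕ) (i : Fin n) (v : (j : Fin n) → Fin (s j) → Bool) :
    gremTrunc s i (gremTrunc s i v) = gremTrunc s i v := by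
  funext j
  by_cases h : j ≤ i <;> simp [gremTrunc, h]

lemma gremTrunc_mono {n : ℕ} {s : Fin n → ℕ} {i j : Fin n} (hij : j ≤ i)
    {v w : (k : Fin n) → Fin (s k) → Bool}
    (h : gremTrunc s i v = gremTrunc s i w) : gremTrunc s j v = gremTrunc s j w := by
  funext k
  by_cases hk : k ≤ j
  · have := congrFun h k
    simp [gremTrunc, hk, hk.trans hij] at this ⊢
    exact this
  · simp [gremTrunc, hk]

lemma gremTrunc_apply_eq {n : ℕ} {s : Fin n → ℕ} {j : Fin n}
    {v w : (k : Fin n) → Fin (s k) → Bool}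
    (h : gremTrunc s j v = gremTrunc s j w) {i : Fin n} (hij : i ≤ j) : v i = w i := by
  have := congrFun h i
  simpa [gremTrunc, hij] using this

lemma grem_card_V {n : ℕ} {s : Fin n → ℕ} :
    Fintype.card ((k : Fin n) → Fin (s k) → Bool) = 2 ^ (∑ i, s i) := by
  classical
  rw [Fintype.card_pi]
  simp only [Fintype.card_fun, Fintype.card_bool, Fintype.card_fin]
  exact Finset.prod_pow_eq_pow_sum _ _ _

lemma grem_pair_count {n : ℕ} {s : Fin n → ℕ} (j : Fin n) :
    (Finset.univ.filter
        (fun p : ((k : Fin n) → Fin (s k) → Bool) × ((k : Fin n) → Fin (s k) → Bool) =>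
        gremTrunc s j p.1 = gremTrunc s j p.2)).card
      * ∏ i ∈ Finset.univ.filter (· ≤ j), 2 ^ (s i)
      ≤ (2 ^ (∑ i, s i)) ^ 2 := by
  classical
  set V := (k : Fin n) → Fin (s k) → Bool
  have h1 : (Finset.univ.filter (fun p : V × V => gremTrunc s j p.1 = gremTrunc s j p.2)).card
      ≤ Fintype.card (V × ((i : {i : Fin n // ¬ i ≤ j}) → Fin (s i.1) → Bool)) := by
    rw [← Finset.card_univ]
    apply Finset.card_le_card_of_injOn
      (fun p => (p.1, fun i => p.2 i.1)) (fun _ _ => Finset.mem_univ _)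
    intro p hp p' hp' h
    simp only [Finset.coe_filter, Set.mem_setOf_eq, Finset.mem_univ, true_and] at hp hp'
    rw [Prod.ext_iff] at h
    have h1 : p.1 = p'.1 := h.1
    have h2 : ∀ i : {i : Fin n // ¬ i ≤ j}, p.2 i.1 = p'.2 i.1 :=
      fun i => congrFun h.2 i
    have h3 : p.2 = p'.2 := by
      funext k
      by_cases hk : k ≤ j
      · rw [← gremTrunc_apply_eq hp hk, h1, gremTrunc_apply_eq hp' hk]
      · exact h2 ⟨k, hk⟩
    exact Prod.ext h1 h3
  have h2 : Fintype.card ((i : {i : Fin n // ¬ i ≤ j}) → Fin (s i.1) → Bool)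
      = ∏ i ∈ Finset.univ.filter (fun i => ¬ i ≤ j), 2 ^ (s i) := by
    rw [Fintype.card_pi]
    calc ∏ i : {i : Fin n // ¬ i ≤ j}, Fintype.card (Fin (s i.1) → Bool)
        = ∏ i : {i : Fin n // ¬ i ≤ j}, 2 ^ (s i.1) :=
          Finset.prod_congr rfl (fun i _ => by simp [Fintype.card_fun])
      _ = ∏ i ∈ Finset.univ.filter (fun i => ¬ i ≤ j), 2 ^ (s i) :=
          (Finset.prod_subtype (Finset.univ.filter (fun i => ¬ i ≤ j))
            (by simp) (fun i => 2 ^ (s i))).symm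
  have h1' : (Finset.univ.filter (fun p : V × V => gremTrunc s j p.1 = gremTrunc s j p.2)).card
      ≤ Fintype.card V * ∏ i ∈ Finset.univ.filter (fun i => ¬ i ≤ j), 2 ^ (s i) := by
    rw [← h2, ← Fintype.card_prod]; exact h1
  have hsplit : (∏ i ∈ Finset.univ.filter (· ≤ j), 2 ^ (s i))
      * ∏ i ∈ Finset.univ.filter (fun i => ¬ i ≤ j), 2 ^ (s i) = 2 ^ (∑ i, s i) := by
    rw [Finset.prod_filter_mul_prod_filter_not Finset.univ (· ≤ j) (fun i => 2 ^ s i)]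
    exact Finset.prod_pow_eq_pow_sum _ _ _
  calc (Finset.univ.filter (fun p : V × V => gremTrunc s j p.1 = gremTrunc s j p.2)).card
      * ∏ i ∈ Finset.univ.filter (· ≤ j), 2 ^ (s i)
      ≤ (Fintype.card V * ∏ i ∈ Finset.univ.filter (fun i => ¬ i ≤ j), 2 ^ (s i))
          * ∏ i ∈ Finset.univ.filter (· ≤ j), 2 ^ (s i) :=
        Nat.mul_le_mul_right _ h1'
    _ = Fintype.card V * ((∏ i ∈ Finset.univ.filter (· ≤ j), 2 ^ (s i))
          * ∏ i ∈ Finset.univ.filter (fun i => ¬ i ≤ j), 2 ^ (s i)) := by ring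
    _ = (2 ^ (∑ i, s i)) ^ 2 := by
        rw [hsplit, grem_card_V (s := s), sq]

section
variable {n : ℕ} {s : Fin n → ℕ} {Ω : Type*} [MeasurableSpace Ω] {P : Measure Ω}
  [IsProbabilityMeasure P]
  {Y : (i : Fin n) → ((j : Fin n) → Fin (s j) → Bool) → Ω → ℝ}
  {Δ : Fin n → Set ℝ} {q : Fin n → ℝ}

lemma grem_inter_prob
    (hPrefix : ∀ i v, Y i (gremTrunc s i v) = Y i v)
    (hIndep : iIndepFun
      (fun t : Σ i : Fin n, {v : (j : Fin n) → Fin (s j) → Bool // gremTrunc s i v = v} =>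
        Y t.1 t.2.1) P)
    (hΔ : ∀ i, MeasurableSet (Δ i))
    (hq : ∀ i, q i = (P ((Y i (fun _ _ => false)) ⁻¹' (Δ i))).toReal)
    (hqY : ∀ i v, P ((Y i v) ⁻¹' (Δ i)) = P ((Y i (fun _ _ => false)) ⁻¹' (Δ i)))
    (v w : (j : Fin n) → Fin (s j) → Bool) :
    (P ((⋂ i, (Y i v) ⁻¹' (Δ i)) ∩ ⋂ i, (Y i w) ⁻¹' (Δ i))).toReal
      = (∏ i, q i) * ∏ i ∈ Finset.univ.filter
          (fun i => ¬ gremTrunc s i v = gremTrunc s i w), q i := by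
  classical
  set T := Σ i : Fin n, {u : (j : Fin n) → Fin (s j) → Bool // gremTrunc s i u = u} with hT
  set ι' : ((j : Fin n) → Fin (s j) → Bool) → Fin n → T :=
    fun u i => ⟨i, ⟨gremTrunc s i u, gremTrunc_idem s i u⟩⟩ with hι'
  set E : T → Set Ω := fun t => (Y t.1 t.2.1) ⁻¹' (Δ t.1) with hE
  have hι'inj : ∀ u, Function.Injective (ι' u) := by
    intro u i i' h
    exact congrArg Sigma.fst h
  have hι'eq : ∀ i, ∀ u u' : (j : Fin n) → Fin (s j) → Bool,
      ι' u i = ι' u' i ↔ gremTrunc s i u = gremTrunc s i u' := by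
    intro i u u'
    constructor
    · intro h
      have h2 := (Sigma.mk.inj_iff.mp h).2
      have h3 := eq_of_heq h2
      exact congrArg Subtype.val h3
    · intro h
      simp only [hι']
      exact congrArg _ (Subtype.ext h)
  have hEι : ∀ u i, E (ι' u i) = (Y i u) ⁻¹' (Δ i) := by
    intro u i
    simp only [hE, hι', hPrefix]
  set S : Finset T := (Finset.univ.image (ι' v)) ∪ (Finset.univ.image (ι' w)) with hS
  have hinter : (⋂ i, (Y i v) ⁻¹' (Δ i)) ∩ (⋂ i, (Y i w) ⁻¹' (Δ i)) = ⋂ t ∈ S, E t := by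
    ext ω
    simp only [Set.mem_inter_iff, Set.mem_iInter, hS, Finset.mem_union, Finset.mem_image,
      Finset.mem_univ, true_and]
    constructor
    · rintro ⟨h1, h2⟩ t ht
      rcases ht with ⟨i, rfl⟩ | ⟨i, rfl⟩
      · rw [hEι]; exact h1 i
      · rw [hEι]; exact h2 i
    · intro h
      constructor
      · intro i
        have := h (ι' v i) (Or.inl ⟨i, rfl⟩)
        rwa [hEι] at this
      · intro i
        have := h (ι' w i) (Or.inr ⟨i, rfl⟩)
        rwa [hEι] at this
  have hprod : P (⋂ t ∈ S, E t) = ∏ t ∈ S, P (E t) :=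
    hIndep.meas_biInter (fun t _ => ⟨Δ t.1, hΔ t.1, rfl⟩)
  have hval : ∀ t : T, P (E t) = ENNReal.ofReal (q t.1) := by
    intro t
    have h1 : P (E t) = P ((Y t.1 (fun _ _ => false)) ⁻¹' (Δ t.1)) := hqY t.1 t.2.1
    rw [h1, hq t.1, ENNReal.ofReal_toReal (measure_ne_top P _)]
  have hSsplit : S = (Finset.univ.image (ι' v)) ∪
      ((Finset.univ.filter (fun i => ¬ gremTrunc s i v = gremTrunc s i w)).image (ι' w)) := by
    ext t
    simp only [hS, Finset.mem_union, Finset.mem_image, Finset.mem_univ, true_and,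
      Finset.mem_filter]
    constructor
    · rintro (⟨i, rfl⟩ | ⟨i, rfl⟩)
      · exact Or.inl ⟨i, rfl⟩
      · by_cases hm : gremTrunc s i v = gremTrunc s i w
        · exact Or.inl ⟨i, (hι'eq i v w).2 hm⟩
        · exact Or.inr ⟨i, hm, rfl⟩
    · rintro (⟨i, rfl⟩ | ⟨i, _, rfl⟩)
      · exact Or.inl ⟨i, rfl⟩
      · exact Or.inr ⟨i, rfl⟩
  have hdisj : Disjoint (Finset.univ.image (ι' v))
      ((Finset.univ.filter (fun i => ¬ gremTrunc s i v = gremTrunc s i w)).image (ι' w)) := by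
    rw [Finset.disjoint_left]
    intro t h1 h2
    simp only [Finset.mem_image, Finset.mem_univ, true_and, Finset.mem_filter] at h1 h2
    obtain ⟨i, rfl⟩ := h1
    obtain ⟨i', hi', heq⟩ := h2
    have hii' : i' = i := congrArg Sigma.fst heq
    subst hii'
    exact hi' ((hι'eq i' v w).1 heq.symm)
  rw [hinter, hprod]
  simp only [hval]
  rw [hSsplit, Finset.prod_union hdisj, Finset.prod_image (fun i _ i' _ h => hι'inj v h),
    Finset.prod_image (fun i _ i' _ h => hι'inj w h)]
  rw [ENNReal.toReal_mul, ENNReal.toReal_prod, ENNReal.toReal_prod]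
  have hqnn : ∀ i, 0 ≤ q i := by
    intro i; rw [hq i]; exact ENNReal.toReal_nonneg
  congr 1 <;> exact Finset.prod_congr rfl fun i _ => ENNReal.toReal_ofReal (hqnn i)

end

/-- Second-moment counting bound for the GREM (quantitative version of
Capocaccia–Cassandro–Picco): the number of leaves all of whose block variables fall in the
prescribed sets `Δ_i` is, with large probability, at least `(1−η) 2^N ∏ P(ξ_i ∈ Δ_i)`. -/
theorem grem_counting_bound
    (n : ℕ) (hn : 1 ≤ n) (s : Fin n → ℕ) (hs : ∀ i, 1 ≤ s i)
    (a : Fin n → ℝ) (ha : ∀ i, 0 ≤ a i)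
    {Ω : Type*} [MeasurableSpace Ω] (P : Measure Ω) [IsProbabilityMeasure P]
    (Y : (i : Fin n) → ((j : Fin n) → Fin (s j) → Bool) → Ω → ℝ)
    (hmeas : ∀ i v, Measurable (Y i v))
    (hPrefix : ∀ i v, Y i (gremTrunc s i v) = Y i v)
    (hIndep : iIndepFun
      (fun t : Σ i : Fin n, {v : (j : Fin n) → Fin (s j) → Bool // gremTrunc s i v = v} =>
        Y t.1 t.2.1) P)
    (hGauss : ∀ i v, P.map (Y i v) = gaussianReal 0 (Real.toNNReal (a i * s i)))
    (Δ : Fin n → Set ℝ) (hΔ : ∀ i, MeasurableSet (Δ i))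
    (q : Fin n → ℝ)
    (hq : ∀ i, q i = ((gaussianReal 0 (Real.toNNReal (a i * s i))) (Δ i)).toReal)
    (hqpos : ∀ i, 0 < q i)
    (η : ℝ) (hη : 0 < η) :
    P {ω | (Nat.card {v : (j : Fin n) → Fin (s j) → Bool // ∀ i, Y i v ω ∈ Δ i} : ℝ)
        ≤ (1 - η) * 2 ^ (∑ i, s i) * ∏ i, q i}
      ≤ ENNReal.ofReal ((1 / η ^ 2) *
          ∑ j : Fin n, 1 / ∏ i ∈ Finset.univ.filter (· ≤ j), (2 ^ (s i) * q i)) := by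
  classical
  have hPmapY : ∀ i v, P ((Y i v) ⁻¹' (Δ i))
      = gaussianReal 0 (Real.toNNReal (a i * s i)) (Δ i) := by
    intro i v
    rw [← hGauss i v, Measure.map_apply (hmeas i v) (hΔ i)]
  have hq' : ∀ i, q i = (P ((Y i (fun _ _ => false)) ⁻¹' (Δ i))).toReal := by
    intro i; rw [hPmapY, hq]
  have hqY : ∀ i v, P ((Y i v) ⁻¹' (Δ i)) = P ((Y i (fun _ _ => false)) ⁻¹' (Δ i)) := by
    intro i v; rw [hPmapY, hPmapY]
  have hP : ∀ v w : (j : Fin n) → Fin (s j) → Bool,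
      (P ((⋂ i, (Y i v) ⁻¹' (Δ i)) ∩ ⋂ i, (Y i w) ⁻¹' (Δ i))).toReal
      = (∏ i, q i) * ∏ i ∈ Finset.univ.filter
          (fun i => ¬ gremTrunc s i v = gremTrunc s i w), q i :=
    grem_inter_prob hPrefix hIndep hΔ hq' hqY
  have hAmeas : ∀ v : (j : Fin n) → Fin (s j) → Bool,
      MeasurableSet (⋂ i, (Y i v) ⁻¹' (Δ i)) :=
    fun v => MeasurableSet.iInter fun i => hmeas i v (hΔ i)
  have hPq : ∀ v : (j : Fin n) → Fin (s j) → Bool,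
      (P (⋂ i, (Y i v) ⁻¹' (Δ i))).toReal = ∏ i, q i := by
    intro v
    have := hP v v
    simpa using this
  set μ0 : ℝ := 2 ^ (∑ i, s i) * ∏ i, q i with hμ0
  set K : Ω → ℝ :=
    fun ω => ∑ v : (j : Fin n) → Fin (s j) → Bool, (⋂ i, (Y i v) ⁻¹' (Δ i)).indicator 1 ω
    with hKdef
  have hqProdPos : 0 < ∏ i, q i := Finset.prod_pos fun i _ => hqpos i
  have hμ0pos : 0 < μ0 := by positivity
  have hint1 : ∀ v : (j : Fin n) → Fin (s j) → Bool,
      Integrable (fun ω => (⋂ i, (Y i v) ⁻¹' (Δ i)).indicator 1 ω) P :=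
    fun v => (integrable_const (1 : ℝ)).indicator (hAmeas v)
  have hint2 : ∀ v w : (j : Fin n) → Fin (s j) → Bool,
      Integrable (fun ω =>
        ((⋂ i, (Y i v) ⁻¹' (Δ i)) ∩ ⋂ i, (Y i w) ⁻¹' (Δ i)).indicator 1 ω) P :=
    fun v w => (integrable_const (1 : ℝ)).indicator ((hAmeas v).inter (hAmeas w))
  have hMem : MemLp K 2 P := by
    have h := memLp_finset_sum' (μ := P) (p := 2) Finset.univ
      (f := fun (v : (j : Fin n) → Fin (s j) → Bool) =>
        (⋂ i, (Y i v) ⁻¹' (Δ i)).indicator (1 : Ω → ℝ))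
      (fun v _ => memLp_indicator_const 2 (hAmeas v) (1 : ℝ) (Or.inr (measure_ne_top P _)))
    have heq : (∑ v : (j : Fin n) → Fin (s j) → Bool,
        (⋂ i, (Y i v) ⁻¹' (Δ i)).indicator (1 : Ω → ℝ)) = K := by
      funext ω
      rw [hKdef]
      simp [Finset.sum_apply]
    rwa [heq] at h
  have hEK : ∫ ω, K ω ∂P = μ0 := by
    simp only [hKdef]
    rw [integral_finset_sum _ (fun v _ => hint1 v)]
    have : ∀ v : (j : Fin n) → Fin (s j) → Bool,
        ∫ ω, (⋂ i, (Y i v) ⁻¹' (Δ i)).indicator 1 ω ∂P = ∏ i, q i := by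
      intro v
      rw [integral_indicator_one (hAmeas v), measureReal_def, hPq]
    rw [Finset.sum_congr rfl fun v _ => this v, Finset.sum_const, Finset.card_univ,
      grem_card_V, nsmul_eq_mul, hμ0]
    push_cast
    ring
  have hEK2 : ∫ ω, (K ω) ^ 2 ∂P = ∑ v : (j : Fin n) → Fin (s j) → Bool,
      ∑ w : (j : Fin n) → Fin (s j) → Bool,
      (P ((⋂ i, (Y i v) ⁻¹' (Δ i)) ∩ ⋂ i, (Y i w) ⁻¹' (Δ i))).toReal := by
    have hsq : ∀ ω, (K ω) ^ 2 = ∑ v : (j : Fin n) → Fin (s j) → Bool,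
        ∑ w : (j : Fin n) → Fin (s j) → Bool,
        ((⋂ i, (Y i v) ⁻¹' (Δ i)) ∩ ⋂ i, (Y i w) ⁻¹' (Δ i)).indicator 1 ω := by
      intro ω
      rw [hKdef, sq, Finset.sum_mul_sum]
      exact Finset.sum_congr rfl fun v _ => Finset.sum_congr rfl fun w _ =>
        (congrFun Set.inter_indicator_one ω).symm
    rw [show (fun ω => (K ω) ^ 2) = fun ω => ∑ v : (j : Fin n) → Fin (s j) → Bool,
        ∑ w : (j : Fin n) → Fin (s j) → Bool,
        ((⋂ i, (Y i v) ⁻¹' (Δ i)) ∩ ⋂ i, (Y i w) ⁻¹' (Δ i)).indicator 1 ω from funext hsq]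
    rw [integral_finset_sum _ (fun v _ => integrable_finset_sum _ fun w _ => hint2 v w)]
    refine Finset.sum_congr rfl fun v _ => ?_
    rw [integral_finset_sum _ (fun w _ => hint2 v w)]
    exact Finset.sum_congr rfl fun w _ => integral_indicator_one ((hAmeas v).inter (hAmeas w))
  -- the variance bound
  have hVar : variance K P ≤ μ0 ^ 2 *
      ∑ j : Fin n, 1 / ∏ i ∈ Finset.univ.filter (· ≤ j), (2 ^ (s i) * q i) := by
    have hvd := variance_eq_sub (μ := P) hMem
    have hKsq : (∫ ω, (K ^ 2) ω ∂P) = ∫ ω, (K ω) ^ 2 ∂P := by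
      simp only [Pi.pow_apply]
    set Q : ℝ := ∏ i, q i with hQ
    set m : (((j : Fin n) → Fin (s j) → Bool) × ((j : Fin n) → Fin (s j) → Bool))
        → Finset (Fin n) :=
      fun p => Finset.univ.filter (fun i => gremTrunc s i p.1 = gremTrunc s i p.2) with hm
    set G : Fin n → ℝ :=
      fun j => Q ^ 2 * (∏ i ∈ Finset.univ.filter (· ≤ j), q i)⁻¹ with hG
    set Jf : (((j : Fin n) → Fin (s j) → Bool) × ((j : Fin n) → Fin (s j) → Bool)) → Fin n :=
      fun p => if h : (m p).Nonempty then (m p).max' h else ⟨0, hn⟩ with hJf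
    have hsum2 : ∫ ω, (K ω) ^ 2 ∂P
        = ∑ p : (((j : Fin n) → Fin (s j) → Bool) × ((j : Fin n) → Fin (s j) → Bool)),
          Q * ∏ i ∈ Finset.univ.filter
            (fun i => ¬ gremTrunc s i p.1 = gremTrunc s i p.2), q i := by
      rw [hEK2, ← Fintype.sum_prod_type']
      exact Finset.sum_congr rfl fun p _ => hP p.1 p.2
    have hμ0sq : μ0 ^ 2
        = ∑ _p : (((j : Fin n) → Fin (s j) → Bool) × ((j : Fin n) → Fin (s j) → Bool)),
          Q ^ 2 := by
      rw [Finset.sum_const, Finset.card_univ, Fintype.card_prod, grem_card_V,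
        nsmul_eq_mul, hμ0]
      push_cast
      ring
    have hvar_eq : variance K P
        = ∑ p : (((j : Fin n) → Fin (s j) → Bool) × ((j : Fin n) → Fin (s j) → Bool)),
          (Q * ∏ i ∈ Finset.univ.filter
            (fun i => ¬ gremTrunc s i p.1 = gremTrunc s i p.2), q i - Q ^ 2) := by
      rw [hvd, hKsq, hsum2, hEK, hμ0sq, ← Finset.sum_sub_distrib]
    -- termwise bound
    have hterm : ∀ p : (((j : Fin n) → Fin (s j) → Bool) × ((j : Fin n) → Fin (s j) → Bool)),
        Q * ∏ i ∈ Finset.univ.filter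
          (fun i => ¬ gremTrunc s i p.1 = gremTrunc s i p.2), q i - Q ^ 2
        ≤ if (m p).Nonempty then G (Jf p) else 0 := by
      intro p
      have hsplitp : (∏ i ∈ m p, q i) * ∏ i ∈ Finset.univ.filter
          (fun i => ¬ gremTrunc s i p.1 = gremTrunc s i p.2), q i = Q :=
        Finset.prod_filter_mul_prod_filter_not Finset.univ _ q
      have hmpos : 0 < ∏ i ∈ m p, q i := Finset.prod_pos fun i _ => hqpos i
      have hFval : ∏ i ∈ Finset.univ.filter
          (fun i => ¬ gremTrunc s i p.1 = gremTrunc s i p.2), q i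
          = Q * (∏ i ∈ m p, q i)⁻¹ := by
        rw [eq_mul_inv_iff_mul_eq₀ (ne_of_gt hmpos), mul_comm]
        exact hsplitp
      by_cases hne : (m p).Nonempty
      · rw [if_pos hne]
        have hJmem : Jf p ∈ m p := by
          rw [hJf]
          simp only [dif_pos hne]
          exact Finset.max'_mem _ _
        have hmp : m p = Finset.univ.filter (· ≤ Jf p) := by
          ext i
          simp only [hm, Finset.mem_filter, Finset.mem_univ, true_and]
          constructor
          · intro hi
            have : i ∈ m p := by
              rw [hm]
              simp only [Finset.mem_filter, Finset.mem_univ, true_and]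
              exact hi
            rw [hJf]
            simp only [dif_pos hne]
            exact Finset.le_max' _ _ this
          · intro hi
            have hJ' : gremTrunc s (Jf p) p.1 = gremTrunc s (Jf p) p.2 := by
              have := hJmem
              rw [hm] at this
              simpa using this
            exact gremTrunc_mono hi hJ'
        have hGval : G (Jf p) = Q ^ 2 * (∏ i ∈ m p, q i)⁻¹ := by
          rw [hG, hmp]
        rw [hFval, hGval]
        have hQpos : 0 < Q := hqProdPos
        nlinarith [sq_nonneg Q, mul_pos hQpos (mul_pos hQpos (inv_pos.2 hmpos))]
      · rw [if_neg hne]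
        have hmempty : m p = ∅ := Finset.not_nonempty_iff_eq_empty.1 hne
        rw [hFval, hmempty]
        simp only [Finset.prod_empty, inv_one, mul_one, sub_nonpos]
        nlinarith [hqProdPos]
    -- assemble
    have hstep : variance K P ≤
        ∑ j : Fin n,
          ((Finset.univ.filter
            (fun p : (((j : Fin n) → Fin (s j) → Bool) × ((j : Fin n) → Fin (s j) → Bool)) =>
              gremTrunc s j p.1 = gremTrunc s j p.2)).card : ℝ) * G j := by
      rw [hvar_eq]
      calc ∑ p : (((j : Fin n) → Fin (s j) → Bool) × ((j : Fin n) → Fin (s j) → Bool)),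
          (Q * ∏ i ∈ Finset.univ.filter
            (fun i => ¬ gremTrunc s i p.1 = gremTrunc s i p.2), q i - Q ^ 2)
          ≤ ∑ p : (((j : Fin n) → Fin (s j) → Bool) × ((j : Fin n) → Fin (s j) → Bool)),
            (if (m p).Nonempty then G (Jf p) else 0) :=
          Finset.sum_le_sum fun p _ => hterm p
        _ = ∑ p ∈ Finset.univ.filter
            (fun p : (((j : Fin n) → Fin (s j) → Bool) × ((j : Fin n) → Fin (s j) → Bool)) =>
              (m p).Nonempty), G (Jf p) := (Finset.sum_filter _ _).symm
        _ = ∑ j : Fin n, ∑ p ∈ (Finset.univ.filter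
            (fun p : (((j : Fin n) → Fin (s j) → Bool) × ((j : Fin n) → Fin (s j) → Bool)) =>
              (m p).Nonempty)).filter (fun p => Jf p = j), G (Jf p) :=
          (Finset.sum_fiberwise _ _ _).symm
        _ ≤ ∑ j : Fin n,
            ((Finset.univ.filter
              (fun p : (((j : Fin n) → Fin (s j) → Bool) × ((j : Fin n) → Fin (s j) → Bool)) =>
                gremTrunc s j p.1 = gremTrunc s j p.2)).card : ℝ) * G j := by
          refine Finset.sum_le_sum fun j _ => ?_
          have hGj : 0 ≤ G j := by
            rw [hG]
            have : 0 < ∏ i ∈ Finset.univ.filter (· ≤ j), q i :=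
              Finset.prod_pos fun i _ => hqpos i
            positivity
          have hsub' : (Finset.univ.filter
              (fun p : (((j : Fin n) → Fin (s j) → Bool) × ((j : Fin n) → Fin (s j) → Bool)) =>
                (m p).Nonempty)).filter (fun p => Jf p = j)
              ⊆ Finset.univ.filter
              (fun p : (((j : Fin n) → Fin (s j) → Bool) × ((j : Fin n) → Fin (s j) → Bool)) =>
                gremTrunc s j p.1 = gremTrunc s j p.2) := by
            intro p hp
            simp only [Finset.mem_filter, Finset.mem_univ, true_and] at hp ⊢
            obtain ⟨hne, hJeq⟩ := hp
            have hJmem : Jf p ∈ m p := by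
              rw [hJf]
              simp only [dif_pos hne]
              exact Finset.max'_mem _ _
            rw [hJeq] at hJmem
            rw [hm] at hJmem
            simpa using hJmem
          calc ∑ p ∈ (Finset.univ.filter
              (fun p : (((j : Fin n) → Fin (s j) → Bool) × ((j : Fin n) → Fin (s j) → Bool)) =>
                (m p).Nonempty)).filter (fun p => Jf p = j), G (Jf p)
              = ∑ p ∈ (Finset.univ.filter
              (fun p : (((j : Fin n) → Fin (s j) → Bool) × ((j : Fin n) → Fin (s j) → Bool)) =>
                (m p).Nonempty)).filter (fun p => Jf p = j), G j := by
                refine Finset.sum_congr rfl fun p hp => ?_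
                simp only [Finset.mem_filter] at hp
                rw [hp.2]
            _ = ((Finset.univ.filter
              (fun p : (((j : Fin n) → Fin (s j) → Bool) × ((j : Fin n) → Fin (s j) → Bool)) =>
                (m p).Nonempty)).filter (fun p => Jf p = j)).card * G j := by
                rw [Finset.sum_const, nsmul_eq_mul]
            _ ≤ _ := by
                exact mul_le_mul_of_nonneg_right
                  (Nat.cast_le.2 (Finset.card_le_card hsub')) hGj
    refine le_trans hstep ?_
    rw [Finset.mul_sum]
    refine Finset.sum_le_sum fun j _ => ?_
    -- per-j count bound
    have hc : (((Finset.univ.filter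
        (fun p : (((j : Fin n) → Fin (s j) → Bool) × ((j : Fin n) → Fin (s j) → Bool)) =>
          gremTrunc s j p.1 = gremTrunc s j p.2)).card : ℝ))
        * ∏ i ∈ Finset.univ.filter (· ≤ j), (2 : ℝ) ^ (s i)
        ≤ ((2 : ℝ) ^ (∑ i, s i)) ^ 2 := by
      exact_mod_cast grem_pair_count j
    have hD1pos : (0 : ℝ) < ∏ i ∈ Finset.univ.filter (· ≤ j), (2 : ℝ) ^ (s i) :=
      Finset.prod_pos fun i _ => by positivity
    have hD2pos : (0 : ℝ) < ∏ i ∈ Finset.univ.filter (· ≤ j), q i :=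
      Finset.prod_pos fun i _ => hqpos i
    have hDsplit : ∏ i ∈ Finset.univ.filter (· ≤ j), (2 ^ (s i) * q i)
        = (∏ i ∈ Finset.univ.filter (· ≤ j), (2 : ℝ) ^ (s i))
          * ∏ i ∈ Finset.univ.filter (· ≤ j), q i := Finset.prod_mul_distrib
    rw [hG, hμ0, hDsplit]
    rw [show (((Finset.univ.filter
        (fun p : (((j : Fin n) → Fin (s j) → Bool) × ((j : Fin n) → Fin (s j) → Bool)) =>
          gremTrunc s j p.1 = gremTrunc s j p.2)).card : ℝ))
        * (Q ^ 2 * (∏ i ∈ Finset.univ.filter (· ≤ j), q i)⁻¹)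
        = (((Finset.univ.filter
        (fun p : (((j : Fin n) → Fin (s j) → Bool) × ((j : Fin n) → Fin (s j) → Bool)) =>
          gremTrunc s j p.1 = gremTrunc s j p.2)).card : ℝ) * Q ^ 2)
          / ∏ i ∈ Finset.univ.filter (· ≤ j), q i from by ring]
    rw [show ((2 : ℝ) ^ (∑ i, s i) * ∏ i, q i) ^ 2 * (1 /
        ((∏ i ∈ Finset.univ.filter (· ≤ j), (2 : ℝ) ^ (s i))
          * ∏ i ∈ Finset.univ.filter (· ≤ j), q i))
        = (((2 : ℝ) ^ (∑ i, s i)) ^ 2 * Q ^ 2) /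
        ((∏ i ∈ Finset.univ.filter (· ≤ j), (2 : ℝ) ^ (s i))
          * ∏ i ∈ Finset.univ.filter (· ≤ j), q i) from by rw [hQ]; ring]
    rw [div_le_div_iff₀ hD2pos (mul_pos hD1pos hD2pos)]
    nlinarith [mul_le_mul_of_nonneg_right hc
      (mul_nonneg (sq_nonneg Q) hD2pos.le), hD2pos.le, sq_nonneg Q]
  -- identify the count with K
  have hKcard : ∀ ω, (Nat.card {v : (j : Fin n) → Fin (s j) → Bool // ∀ i, Y i v ω ∈ Δ i} : ℝ)
      = K ω := by
    intro ω
    rw [Nat.card_eq_fintype_card, Fintype.card_subtype, Finset.card_filter, hKdef]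
    push_cast
    refine Finset.sum_congr rfl fun v _ => ?_
    by_cases h : ∀ i, Y i v ω ∈ Δ i
    · have : ω ∈ ⋂ i, (Y i v) ⁻¹' (Δ i) := Set.mem_iInter.2 h
      simp [h, Set.indicator_of_mem this]
    · have : ω ∉ ⋂ i, (Y i v) ⁻¹' (Δ i) := fun hc => h (Set.mem_iInter.1 hc)
      simp [h, Set.indicator_of_notMem this]
  have hsub : {ω | (Nat.card {v : (j : Fin n) → Fin (s j) → Bool // ∀ i, Y i v ω ∈ Δ i} : ℝ)
        ≤ (1 - η) * 2 ^ (∑ i, s i) * ∏ i, q i}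
      ⊆ {ω | η * μ0 ≤ |K ω - ∫ ω, K ω ∂P|} := by
    intro ω hω
    simp only [Set.mem_setOf_eq] at hω ⊢
    rw [hKcard ω] at hω
    rw [hEK]
    have h1 : K ω ≤ (1 - η) * μ0 := by rw [hμ0]; linarith [hω]
    have h2 : η * μ0 ≤ μ0 - K ω := by nlinarith
    calc η * μ0 ≤ μ0 - K ω := h2
      _ ≤ |K ω - μ0| := by rw [abs_sub_comm]; exact le_abs_self _
  have hcheb := meas_ge_le_variance_div_sq (μ := P) hMem (mul_pos hη hμ0pos)
  refine le_trans (measure_mono hsub) (le_trans hcheb (ENNReal.ofReal_le_ofReal ?_))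
  rw [div_le_iff₀ (by positivity)]
  calc variance K P
      ≤ μ0 ^ 2 * ∑ j : Fin n, 1 / ∏ i ∈ Finset.univ.filter (· ≤ j), (2 ^ (s i) * q i) := hVar
    _ = 1 / η ^ 2 * (∑ j : Fin n, 1 / ∏ i ∈ Finset.univ.filter (· ≤ j), (2 ^ (s i) * q i))
        * (η * μ0) ^ 2 := by
        field_simp
end

section
/- Let π be a probability distribution on T_N with π(v) > 0 for every vertex v, and consider the Metropolis chain on T_N with stationary distribution π. Then for every s ∈ [0, 1/2), the s-conductance Φ_s of this chain satisfies Φ_s ≥ inf{ (1/3)·π(S) / (π(A) − s) : S ⊆ T_N, A = Desc⁰(S), π(A) > s }. -/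
open MeasureTheory

noncomputable instance treeVertexFintype (N : ℕ) :
    Fintype {l : List Bool // l.length ≤ N} :=
  @Fintype.ofFinite _ (List.finite_length_le Bool N)

/-- Off-diagonal transition probabilities of the Metropolis chain on the binary tree of
depth `N` with target distribution `π`: from `v`, each of the parent and the two children
is proposed with probability `1/3` and an existing proposal `w` is accepted with
probability `min (π w / π v) 1`. -/
noncomputable def metroProp {N : ℕ} (π : {l : List Bool // l.length ≤ N} → ℝ)
    (v w : {l : List Bool // l.length ≤ N}) : ℝ :=
  if w.1 ≠ v.1 ∧ (w.1 = v.1.dropLast ∨ w.1 = v.1 ++ [false] ∨ w.1 = v.1 ++ [true]) then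
    (1 / 3) * min (π w / π v) 1
  else 0

/-- The full transition matrix of the Metropolis chain on the binary tree of depth `N`:
off-diagonal entries are given by `metroProp`, and the diagonal holds the remaining mass
(rejections and nonexistent moves). -/
noncomputable def metroK {N : ℕ} (π : {l : List Bool // l.length ≤ N} → ℝ)
    (v w : {l : List Bool // l.length ≤ N}) : ℝ :=
  if w = v then 1 - ∑ u ∈ Finset.univ.erase v, metroProp π v u
  else metroProp π v w

section TreeAux

lemma sum_image_le'' {α β : Type*} [DecidableEq β] (s : Finset α) (f : α → β) (g : β → ℝ)
    (hg : ∀ a ∈ s, 0 ≤ g (f a)) :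
    ∑ b ∈ s.image f, g b ≤ ∑ a ∈ s, g (f a) := by
  classical
  induction s using Finset.cons_induction with
  | empty => simp
  | cons a s ha ih =>
    rw [Finset.cons_eq_insert, Finset.image_insert, Finset.sum_insert ha]
    have ih' := ih (fun x hx => hg x (Finset.mem_cons.mpr (Or.inr hx)))
    by_cases h : f a ∈ s.image f
    · rw [Finset.insert_eq_self.mpr h]
      have h0 := hg a (Finset.mem_cons_self a s)
      linarith
    · rw [Finset.sum_insert h]
      exact add_le_add le_rfl ih'

noncomputable def parentV {N : ℕ} (v : {l : List Bool // l.length ≤ N}) :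
    {l : List Bool // l.length ≤ N} :=
  ⟨v.1.dropLast, by have := v.2; rw [List.length_dropLast]; omega⟩

lemma parentV_length {N : ℕ} (v : {l : List Bool // l.length ≤ N}) :
    (parentV v).1.length = v.1.length - 1 := List.length_dropLast

lemma parentV_prefix {N : ℕ} (v : {l : List Bool // l.length ≤ N}) :
    (parentV v).1 <+: v.1 := List.dropLast_prefix v.1

lemma parentV_ne {N : ℕ} (v : {l : List Bool // l.length ≤ N}) (h : v.1 ≠ []) :
    (parentV v).1 ≠ v.1 := by
  intro he
  have h1 := parentV_length v
  have h2 : 0 < v.1.length := List.length_pos_iff.mpr h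
  rw [he] at h1
  omega

lemma mul_min_div (a b : ℝ) (ha : 0 < a) :
    a * ((1 / 3 : ℝ) * min (b / a) 1) = 1 / 3 * min b a := by
  rcases le_total b a with h | h
  · rw [min_eq_left ((div_le_one ha).mpr h), min_eq_left h]
    field_simp
  · rw [min_eq_right ((one_le_div ha).mpr h), min_eq_right h]
    ring

lemma cross_child {N : ℕ} (π : {l : List Bool // l.length ≤ N} → ℝ)
    (hπpos : ∀ v, 0 < π v) (v : {l : List Bool // l.length ≤ N}) (hv : v.1 ≠ []) :
    π v * metroProp π v (parentV v) = 1 / 3 * min (π (parentV v)) (π v) := by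
  rw [metroProp, if_pos ⟨parentV_ne v hv, Or.inl rfl⟩]
  exact mul_min_div (π v) (π (parentV v)) (hπpos v)

lemma cross_parent {N : ℕ} (π : {l : List Bool // l.length ≤ N} → ℝ)
    (hπpos : ∀ v, 0 < π v) (v : {l : List Bool // l.length ≤ N}) (hv : v.1 ≠ []) :
    π (parentV v) * metroProp π (parentV v) v = 1 / 3 * min (π v) (π (parentV v)) := by
  have hadj : v.1 = (parentV v).1 ++ [false] ∨ v.1 = (parentV v).1 ++ [true] := by
    have h := List.dropLast_append_getLast hv
    have hp : ((parentV v).1 : List Bool) = v.1.dropLast := rfl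
    rcases Bool.dichotomy (v.1.getLast hv) with hb | hb
    · left; rw [hp, ← hb, h]
    · right; rw [hp, ← hb, h]
  rw [metroProp, if_pos ⟨fun he => parentV_ne v hv he.symm, Or.inr hadj⟩]
  exact mul_min_div (π (parentV v)) (π v) (hπpos (parentV v))

end TreeAux

open Classical in
/-- For the Metropolis chain on the binary tree `T_N` with positive target
distribution `π`, the `s`-conductance is bounded below by the infimum of
`(1/3)·π(S)/(π(Desc⁰(S)) − s)` over sets `S` of vertices with `π(Desc⁰(S)) > s`; that is,
every measurable `A` with `s < π(A) < 1 − s` has conductance ratio at least this infimum. -/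
theorem tree_metropolis_sConductance_lower_bound
    (N : ℕ) (π : {l : List Bool // l.length ≤ N} → ℝ)
    (hπpos : ∀ v, 0 < π v) (hπsum : ∑ v, π v = 1)
    (s : ℝ) (hs0 : 0 ≤ s) (hs : s < 1 / 2)
    (A : Finset {l : List Bool // l.length ≤ N})
    (hA1 : s < ∑ v ∈ A, π v) (hA2 : ∑ v ∈ A, π v < 1 - s) :
    sInf {r : ℝ | ∃ S : Finset {l : List Bool // l.length ≤ N},
        s < ∑ w ∈ Finset.univ.filter (fun w => ∃ v ∈ S, v.1 <+: w.1), π w ∧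
        r = (1 / 3) * (∑ v ∈ S, π v) /
          ((∑ w ∈ Finset.univ.filter (fun w => ∃ v ∈ S, v.1 <+: w.1), π w) - s)}
      ≤ (∑ u ∈ A, π u * ∑ w ∈ Aᶜ, metroK π u w) /
          min ((∑ v ∈ A, π v) - s) ((∑ v ∈ Aᶜ, π v) - s) := by
  classical
  -- mass of complement
  have hAc : ∑ v ∈ Aᶜ, π v = 1 - ∑ v ∈ A, π v := by
    have h := Finset.sum_add_sum_compl A π
    rw [hπsum] at h
    linarith
  have hAcs : s < ∑ v ∈ Aᶜ, π v := by rw [hAc]; linarith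
  -- the root
  set root : {l : List Bool // l.length ≤ N} := ⟨[], by simp⟩ with hroot
  set B : Finset {l : List Bool // l.length ≤ N} := if root ∈ A then Aᶜ else A with hB
  have hrootB : root ∉ B := by
    by_cases h : root ∈ A
    · rw [hB, if_pos h]; simpa using h
    · rw [hB, if_neg h]; exact h
  have hBne : ∀ v ∈ B, v.1 ≠ [] := by
    intro v hv he
    exact hrootB (by rwa [show v = root from Subtype.ext he] at hv)
  have hBmass : min ((∑ v ∈ A, π v) - s) ((∑ v ∈ Aᶜ, π v) - s) ≤ (∑ v ∈ B, π v) - s := by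
    by_cases h : root ∈ A
    · rw [hB, if_pos h]; exact min_le_right _ _
    · rw [hB, if_neg h]; exact min_le_left _ _
  have hBs : s < ∑ v ∈ B, π v := by
    by_cases h : root ∈ A
    · rw [hB, if_pos h]; exact hAcs
    · rw [hB, if_neg h]; exact hA1
  -- boundary edges and the chosen set S
  set E : Finset {l : List Bool // l.length ≤ N} := B.filter (fun v => parentV v ∉ B) with hE
  set f : {l : List Bool // l.length ≤ N} → {l : List Bool // l.length ≤ N} := fun v => if π v ≤ π (parentV v) then v else parentV v with hf
  set S : Finset {l : List Bool // l.length ≤ N} := E.image f with hS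
  set D : Finset {l : List Bool // l.length ≤ N} := Finset.univ.filter (fun w => ∃ v ∈ S, v.1 <+: w.1) with hD
  -- every vertex of B has an ancestor-or-self in E
  have hchain : ∀ n : ℕ, ∀ w ∈ B, w.1.length ≤ n → ∃ v ∈ E, v.1 <+: w.1 := by
    intro n
    induction n with
    | zero =>
      intro w hw hl
      exact absurd (List.length_eq_zero_iff.mp (Nat.le_zero.mp hl)) (hBne w hw)
    | succ n ih =>
      intro w hw hl
      by_cases hp : parentV w ∈ B
      · have hwne : w.1 ≠ [] := hBne w hw
        have hlen : (parentV w).1.length ≤ n := by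
          have := parentV_length w
          have : 0 < w.1.length := List.length_pos_iff.mpr hwne
          omega
        obtain ⟨v, hv, hpre⟩ := ih (parentV w) hp (by rw [parentV_length]; omega)
        exact ⟨v, hv, hpre.trans (parentV_prefix w)⟩
      · exact ⟨w, Finset.mem_filter.mpr ⟨hw, hp⟩, List.prefix_refl _⟩
  have hBD : B ⊆ D := by
    intro w hw
    obtain ⟨v, hv, hpre⟩ := hchain w.1.length w hw le_rfl
    rw [hD, Finset.mem_filter]
    refine ⟨Finset.mem_univ _, f v, Finset.mem_image_of_mem f hv, ?_⟩
    rw [hf]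
    by_cases h : π v ≤ π (parentV v)
    · simpa [h] using hpre
    · simp only [if_neg h]
      exact (parentV_prefix v).trans hpre
  have hBDmass : ∑ v ∈ B, π v ≤ ∑ v ∈ D, π v :=
    Finset.sum_le_sum_of_subset_of_nonneg hBD (fun v _ _ => (hπpos v).le)
  have hDs : s < ∑ v ∈ D, π v := lt_of_lt_of_le hBs hBDmass
  -- rewrite Q as a double sum over A ×ˢ Aᶜ
  set g : ({l : List Bool // l.length ≤ N} × {l : List Bool // l.length ≤ N}) → ℝ := fun p => π p.1 * metroProp π p.1 p.2 with hg
  have hgnn : ∀ p : ({l : List Bool // l.length ≤ N} × {l : List Bool // l.length ≤ N}), 0 ≤ g p := by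
    intro p
    rw [hg]
    have : 0 ≤ metroProp π p.1 p.2 := by
      rw [metroProp]
      split_ifs with h
      · have h1 : (0:ℝ) ≤ min (π p.2 / π p.1) 1 :=
          le_min (div_nonneg (hπpos p.2).le (hπpos p.1).le) zero_le_one
        positivity
      · exact le_refl 0
    exact mul_nonneg (hπpos _).le this
  have hQ : (∑ u ∈ A, π u * ∑ w ∈ Aᶜ, metroK π u w) = ∑ p ∈ A ×ˢ Aᶜ, g p := by
    rw [Finset.sum_product]
    refine Finset.sum_congr rfl fun u hu => ?_
    rw [Finset.mul_sum]
    refine Finset.sum_congr rfl fun w hw => ?_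
    have hne : w ≠ u := fun h => (Finset.mem_compl.mp hw) (h ▸ hu)
    rw [hg, metroK, if_neg hne]
  -- the pairing of a boundary vertex with its parent, oriented from A to Aᶜ
  set pair : {l : List Bool // l.length ≤ N} → ({l : List Bool // l.length ≤ N} × {l : List Bool // l.length ≤ N}) := fun v => if v ∈ A then (v, parentV v) else (parentV v, v)
    with hpair
  have hpairmem : ∀ v ∈ E, pair v ∈ A ×ˢ Aᶜ := by
    intro v hv
    rw [hE, Finset.mem_filter] at hv
    obtain ⟨hvB, hpB⟩ := hv
    by_cases h : root ∈ A
    · rw [hB, if_pos h] at hvB hpB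
      have hvA : v ∉ A := Finset.mem_compl.mp hvB
      have hpA : parentV v ∈ A := by
        by_contra hc
        exact hpB (Finset.mem_compl.mpr hc)
      rw [hpair]
      simp only [if_neg hvA, Finset.mem_product]
      exact ⟨hpA, hvB⟩
    · rw [hB, if_neg h] at hvB hpB
      rw [hpair]
      simp only [if_pos hvB, Finset.mem_product]
      exact ⟨hvB, Finset.mem_compl.mpr hpB⟩
  have hpairval : ∀ v ∈ E, g (pair v) = 1 / 3 * min (π v) (π (parentV v)) := by
    intro v hv
    rw [hE, Finset.mem_filter] at hv
    have hvne : v.1 ≠ [] := hBne v hv.1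
    rw [hpair]
    by_cases h : v ∈ A
    · simp only [if_pos h, hg]
      rw [cross_child π hπpos v hvne, min_comm]
    · simp only [if_neg h, hg]
      rw [cross_parent π hπpos v hvne]
  have hpairinj : Set.InjOn pair ↑E := by
    intro v hv v' hv' heq
    rw [Finset.mem_coe, hE, Finset.mem_filter] at hv hv'
    have hvne : v.1 ≠ [] := hBne v hv.1
    have hvne' : v'.1 ≠ [] := hBne v' hv'.1
    have hl : 0 < v.1.length := List.length_pos_iff.mpr hvne
    have hl' : 0 < v'.1.length := List.length_pos_iff.mpr hvne'
    rw [hpair] at heq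
    dsimp only at heq
    by_cases h : v ∈ A <;> by_cases h' : v' ∈ A
    · rw [if_pos h, if_pos h', Prod.mk.injEq] at heq
      exact heq.1
    · rw [if_pos h, if_neg h', Prod.mk.injEq] at heq
      exfalso
      have e1 : v = parentV v' := heq.1
      have e2 : parentV v = v' := heq.2
      have l1 := parentV_length v'
      have l2 := parentV_length v
      rw [← e1] at l1
      rw [e2] at l2
      omega
    · rw [if_neg h, if_pos h', Prod.mk.injEq] at heq
      exfalso
      have e1 : parentV v = v' := heq.1
      have e2 : v = parentV v' := heq.2
      have l1 := parentV_length v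
      have l2 := parentV_length v'
      rw [e1] at l1
      rw [← e2] at l2
      omega
    · rw [if_neg h, if_neg h', Prod.mk.injEq] at heq
      exact heq.2
  -- numerator bound
  have hSE : ∑ u ∈ S, π u ≤ ∑ v ∈ E, π (f v) :=
    sum_image_le'' E f π (fun a _ => (hπpos _).le)
  have hfE : ∀ v ∈ E, π (f v) = min (π v) (π (parentV v)) := by
    intro v hv
    simp only [hf]
    split_ifs with h
    · rw [min_eq_left h]
    · rw [min_eq_right (le_of_not_ge h)]
  have hnum : 1 / 3 * (∑ u ∈ S, π u) ≤ ∑ u ∈ A, π u * ∑ w ∈ Aᶜ, metroK π u w := by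
    rw [hQ]
    calc 1 / 3 * (∑ u ∈ S, π u) ≤ 1 / 3 * ∑ v ∈ E, π (f v) := by
          have : (0:ℝ) ≤ 1/3 := by norm_num
          exact mul_le_mul_of_nonneg_left hSE this
      _ = ∑ v ∈ E, 1 / 3 * min (π v) (π (parentV v)) := by
          rw [Finset.mul_sum]
          exact Finset.sum_congr rfl fun v hv => by rw [hfE v hv]
      _ = ∑ v ∈ E, g (pair v) := Finset.sum_congr rfl fun v hv => (hpairval v hv).symm
      _ = ∑ p ∈ E.image pair, g p := (Finset.sum_image (fun x hx y hy h => hpairinj hx hy h)).symm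
      _ ≤ ∑ p ∈ A ×ˢ Aᶜ, g p := by
          refine Finset.sum_le_sum_of_subset_of_nonneg ?_ (fun p _ _ => hgnn p)
          intro p hp
          obtain ⟨v, hv, rfl⟩ := Finset.mem_image.mp hp
          exact hpairmem v hv
  -- assemble
  have hSnn : (0:ℝ) ≤ ∑ u ∈ S, π u := Finset.sum_nonneg fun u _ => (hπpos u).le
  have hQnn : (0:ℝ) ≤ ∑ u ∈ A, π u * ∑ w ∈ Aᶜ, metroK π u w := by
    calc (0:ℝ) ≤ 1/3 * (∑ u ∈ S, π u) := by positivity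
      _ ≤ _ := hnum
  have hmin_pos : 0 < min ((∑ v ∈ A, π v) - s) ((∑ v ∈ Aᶜ, π v) - s) :=
    lt_min (by linarith) (by linarith)
  have hmemb : (1 / 3) * (∑ v ∈ S, π v) / ((∑ w ∈ D, π w) - s) ∈
      {r : ℝ | ∃ S : Finset {l : List Bool // l.length ≤ N},
        s < ∑ w ∈ Finset.univ.filter (fun w => ∃ v ∈ S, v.1 <+: w.1), π w ∧
        r = (1 / 3) * (∑ v ∈ S, π v) /
          ((∑ w ∈ Finset.univ.filter (fun w => ∃ v ∈ S, v.1 <+: w.1), π w) - s)} := by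
    exact ⟨S, by rw [← hD]; exact hDs, by rw [← hD]⟩
  have hbdd : BddBelow {r : ℝ | ∃ S : Finset {l : List Bool // l.length ≤ N},
        s < ∑ w ∈ Finset.univ.filter (fun w => ∃ v ∈ S, v.1 <+: w.1), π w ∧
        r = (1 / 3) * (∑ v ∈ S, π v) /
          ((∑ w ∈ Finset.univ.filter (fun w => ∃ v ∈ S, v.1 <+: w.1), π w) - s)} := by
    refine ⟨0, fun r hr => ?_⟩
    obtain ⟨S', hS'1, rfl⟩ := hr
    have h1 : (0:ℝ) ≤ (1 / 3) * (∑ v ∈ S', π v) := by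
      have := Finset.sum_nonneg (fun u (_ : u ∈ S') => (hπpos u).le)
      positivity
    exact div_nonneg h1 (by linarith)
  have hBDmass' : (∑ v ∈ B, π v) - s ≤ (∑ v ∈ D, π v) - s := by linarith
  refine le_trans (csInf_le hbdd hmemb) ?_
  exact div_le_div₀ hQnn hnum hmin_pos (le_trans hBmass hBDmass')
end

section
/- Let X₁,…,X_k be i.i.d. copies of a nonnegative random variable X with P(X ≥ ε₁) ≥ ε₂ for some ε₁ > 0 and ε₂ > 0, and let p₁,…,p_k ≥ 0 with Σ_{j=1}^k p_j = 1. Then P( Σ_{j=1}^k p_j X_j ≤ ε₁ε₂/2 ) ≤ exp( −ε₂² / (2·max_j p_j) ). -/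
open MeasureTheory ProbabilityTheory

lemma bern_mgf_bound {q s : ℝ} (hq0 : 0 ≤ q) (hq1 : q ≤ 1) (hs : s ≤ 0) :
    1 - q + q * Real.exp s ≤ Real.exp (q * s + s ^ 2 / 8) := by
  set D : ℝ → ℝ := fun x => 1 - q + q * Real.exp x with hDdef
  have hD : ∀ x, 0 < D x := by
    intro x
    rcases lt_or_eq_of_le hq0 with h | h
    · have := Real.exp_pos x
      simp only [hDdef]
      nlinarith
    · simp [hDdef, ← h]
  have hDne : ∀ x, D x ≠ 0 := fun x => (hD x).ne'
  set g : ℝ → ℝ := fun x => q + x / 4 - q * Real.exp x / D x with hgdef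
  set h : ℝ → ℝ := fun x => q * x + x ^ 2 / 8 - Real.log (D x) with hhdef
  have hderD : ∀ x, HasDerivAt D (q * Real.exp x) x := by
    intro x
    exact ((Real.hasDerivAt_exp x).const_mul q).const_add (1 - q)
  have hderh : ∀ x, HasDerivAt h (g x) x := by
    intro x
    have h1 : HasDerivAt (fun x : ℝ => q * x) q x := by
      simpa using (hasDerivAt_id x).const_mul q
    have h2 : HasDerivAt (fun x : ℝ => x ^ 2 / 8) (x / 4) x := by
      have := (hasDerivAt_pow 2 x).div_const 8
      refine this.congr_deriv ?_
      ring
    have h3 : HasDerivAt (fun x => Real.log (D x)) (q * Real.exp x / D x) x :=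
      (hderD x).log (hDne x)
    exact (h1.add h2).sub h3
  have hderg : ∀ x, HasDerivAt g (1 / 4 -
      (q * Real.exp x * D x - q * Real.exp x * (q * Real.exp x)) / (D x) ^ 2) x := by
    intro x
    have hn : HasDerivAt (fun x => q * Real.exp x) (q * Real.exp x) x :=
      (Real.hasDerivAt_exp x).const_mul q
    have hr : HasDerivAt (fun x => q * Real.exp x / D x)
        ((q * Real.exp x * D x - q * Real.exp x * (q * Real.exp x)) / (D x) ^ 2) x :=
      hn.div (hderD x) (hDne x)
    have h2 : HasDerivAt (fun x : ℝ => q + x / 4) (1 / 4) x := by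
      simpa using ((hasDerivAt_id x).div_const 4).const_add q
    exact h2.sub hr
  have hg' : ∀ x, 0 ≤ 1 / 4 -
      (q * Real.exp x * D x - q * Real.exp x * (q * Real.exp x)) / (D x) ^ 2 := by
    intro x
    rw [sub_nonneg, div_le_iff₀ (pow_pos (hD x) 2)]
    have key : ∀ a b : ℝ, a * b - a * a ≤ 1 / 4 * b ^ 2 := by
      intro a b; nlinarith [sq_nonneg (b - 2 * a)]
    exact key (q * Real.exp x) (D x)
  have hmono : Monotone g := by
    have hdiff : Differentiable ℝ g := fun x => (hderg x).differentiableAt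
    refine monotone_of_deriv_nonneg hdiff ?_
    intro x
    rw [(hderg x).deriv]
    exact hg' x
  have hg0 : g 0 = 0 := by
    simp [hgdef, hDdef]
  have hgle : ∀ x ≤ (0:ℝ), g x ≤ 0 := fun x hx => hg0 ▸ hmono hx
  have hanti : AntitoneOn h (Set.Iic 0) := by
    refine antitoneOn_of_deriv_nonpos (convex_Iic 0) ?_ ?_ ?_
    · exact fun x _ => ((hderh x).differentiableAt).continuousAt.continuousWithinAt
    · exact fun x _ => ((hderh x).differentiableAt).differentiableWithinAt
    · intro x hx
      rw [(hderh x).deriv]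
      exact hgle x (le_of_lt (by simpa using hx))
  have h0 : h 0 = 0 := by simp [hhdef, hDdef]
  have hhs : 0 ≤ h s := by
    have := hanti (Set.mem_Iic.2 hs) (Set.mem_Iic.2 le_rfl) hs
    rw [h0] at this
    exact this
  have hlog : Real.log (D s) ≤ q * s + s ^ 2 / 8 := by
    have h2 : (0:ℝ) ≤ q * s + s ^ 2 / 8 - Real.log (D s) := hhs
    linarith
  calc 1 - q + q * Real.exp s = D s := rfl
    _ = Real.exp (Real.log (D s)) := (Real.exp_log (hD s)).symm
    _ ≤ _ := Real.exp_le_exp.2 hlog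


/-- For i.i.d. nonnegative random variables with `P(X ≥ ε₁) ≥ ε₂` and
nonnegative weights summing to one,
`P(Σ p_j X_j ≤ ε₁ε₂/2) ≤ exp(−ε₂²/(2 max_j p_j))`. -/
theorem weighted_sum_lower_tail
    {Ω : Type*} [MeasurableSpace Ω] (P : Measure Ω) [IsProbabilityMeasure P]
    (k : ℕ) (hk : 0 < k)
    (Xs : Fin k → Ω → ℝ) (hmeas : ∀ j, Measurable (Xs j))
    (hnonneg : ∀ j ω, 0 ≤ Xs j ω)
    (hIndep : iIndepFun Xs P)
    (hIdent : ∀ i j, P.map (Xs i) = P.map (Xs j))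
    (ε₁ ε₂ : ℝ) (hε₁ : 0 < ε₁) (hε₂ : 0 < ε₂)
    (htail : ∀ j, P {ω | ε₁ ≤ Xs j ω} ≥ ENNReal.ofReal ε₂)
    (ps : Fin k → ℝ) (hps : ∀ j, 0 ≤ ps j) (hsum : ∑ j, ps j = 1) :
    P {ω | ∑ j, ps j * Xs j ω ≤ ε₁ * ε₂ / 2}
      ≤ ENNReal.ofReal (Real.exp (-ε₂ ^ 2 /
          (2 * Finset.univ.sup' ⟨⟨0, hk⟩, Finset.mem_univ _⟩ ps))) := by
  classical
  set m := Finset.univ.sup' ⟨⟨0, hk⟩, Finset.mem_univ _⟩ ps with hmdef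
  have hpm : ∀ j, ps j ≤ m := fun j => Finset.le_sup' ps (Finset.mem_univ j)
  have hm0 : 0 < m := by
    by_contra hc
    push_neg at hc
    have hz : ∀ j, ps j = 0 := fun j => le_antisymm ((hpm j).trans hc) (hps j)
    simp [hz] at hsum
  have hε₂1 : ε₂ ≤ 1 := by
    have h2 : ENNReal.ofReal ε₂ ≤ 1 := le_trans (htail ⟨0, hk⟩) prob_le_one
    exact ENNReal.ofReal_le_one.mp h2
  set t : ℝ := -(2 * ε₂ / (ε₁ * m)) with htdef
  have ht0 : t ≤ 0 := by
    rw [htdef, neg_nonpos]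
    positivity
  set Y : Fin k → Ω → ℝ := fun j ω => ps j * Xs j ω with hYdef
  have hYmeas : ∀ j, Measurable (Y j) := fun j => (hmeas j).const_mul (ps j)
  have hYindep : iIndepFun Y P :=
    hIndep.comp (fun j x => ps j * x) (fun j => measurable_const_mul _)
  have hYnonneg : ∀ j ω, 0 ≤ Y j ω := fun j ω => mul_nonneg (hps j) (hnonneg j ω)
  have hbdd : ∀ j ω, Real.exp (t * Y j ω) ≤ 1 := fun j ω =>
    Real.exp_le_one_iff.mpr (mul_nonpos_of_nonpos_of_nonneg ht0 (hYnonneg j ω))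
  have hint : ∀ j, Integrable (fun ω => Real.exp (t * Y j ω)) P := by
    intro j
    refine ⟨(((hYmeas j).const_mul t).exp).aestronglyMeasurable, ?_⟩
    refine HasFiniteIntegral.of_bounded (C := 1) ?_
    filter_upwards with ω
    rw [Real.norm_eq_abs, abs_of_pos (Real.exp_pos _)]
    exact hbdd j ω
  -- per-coordinate mgf bound
  have hmgf : ∀ j, mgf (Y j) P t ≤
      Real.exp (ε₂ * (t * ps j * ε₁) + (t * ps j * ε₁) ^ 2 / 8) := by
    intro j
    set A : Set Ω := {ω | ε₁ ≤ Xs j ω} with hAdef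
    have hA : MeasurableSet A := measurableSet_le measurable_const (hmeas j)
    set q : ℝ := (P A).toReal with hqdef
    have hq2 : ε₂ ≤ q := by
      have := ENNReal.toReal_mono (measure_ne_top P A) (htail j)
      rwa [ENNReal.toReal_ofReal hε₂.le] at this
    set c : ℝ := Real.exp (t * ps j * ε₁) with hcdef
    have hc0 : 0 < c := Real.exp_pos _
    have hc1 : c ≤ 1 := Real.exp_le_one_iff.mpr
      (mul_nonpos_of_nonpos_of_nonneg (mul_nonpos_of_nonpos_of_nonneg ht0 (hps j)) hε₁.le)
    set g : Ω → ℝ := fun ω => A.indicator (fun _ => c) ω + Aᶜ.indicator (fun _ => (1:ℝ)) ω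
      with hgdef
    have hgint : Integrable g P :=
      ((integrable_const c).indicator hA).add ((integrable_const (1:ℝ)).indicator hA.compl)
    have hpt : ∀ ω, Real.exp (t * Y j ω) ≤ g ω := by
      intro ω
      by_cases hω : ω ∈ A
      · have hx : ε₁ ≤ Xs j ω := hω
        have : t * Y j ω ≤ t * ps j * ε₁ := by
          have h1 : t * ps j ≤ 0 := mul_nonpos_of_nonpos_of_nonneg ht0 (hps j)
          have := mul_le_mul_of_nonpos_left hx h1
          calc t * Y j ω = t * ps j * Xs j ω := by rw [hYdef]; ring
            _ ≤ t * ps j * ε₁ := this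
        simp only [hgdef, Set.indicator_of_mem hω, Set.indicator_of_notMem
          (by simpa using hω : ω ∉ Aᶜ)]
        simpa [hcdef] using Real.exp_le_exp.2 this
      · simp only [hgdef, Set.indicator_of_notMem hω,
          Set.indicator_of_mem (Set.mem_compl hω)]
        simpa using hbdd j ω
    have hgval : ∫ ω, g ω ∂P = c * q + (1 - q) := by
      rw [hgdef, integral_add ((integrable_const c).indicator hA)
        ((integrable_const (1:ℝ)).indicator hA.compl),
        integral_indicator_const _ hA, integral_indicator_const _ hA.compl]
      have hcompl : (P Aᶜ).toReal = 1 - q := by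
        rw [measure_compl hA (measure_ne_top P A), measure_univ,
          ENNReal.toReal_sub_of_le prob_le_one ENNReal.one_ne_top, ENNReal.toReal_one]
      rw [measureReal_def, measureReal_def, hcompl]
      simp [hqdef, mul_comm]
    have h1 : mgf (Y j) P t ≤ c * q + (1 - q) := by
      rw [mgf]
      calc ∫ ω, Real.exp (t * Y j ω) ∂P ≤ ∫ ω, g ω ∂P :=
        integral_mono (hint j) hgint hpt
        _ = c * q + (1 - q) := hgval
    have h2 : c * q + (1 - q) ≤ 1 - ε₂ + ε₂ * c := by nlinarith
    have h3 : 1 - ε₂ + ε₂ * c ≤ Real.exp (ε₂ * (t * ps j * ε₁) + (t * ps j * ε₁) ^ 2 / 8) := by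
      have := bern_mgf_bound (q := ε₂) (s := t * ps j * ε₁) hε₂.le hε₂1
        (mul_nonpos_of_nonpos_of_nonneg (mul_nonpos_of_nonpos_of_nonneg ht0 (hps j)) hε₁.le)
      simpa [hcdef] using this
    linarith
  -- Chernoff
  have hsumint : Integrable (fun ω => Real.exp (t * (∑ j, Y j) ω)) P :=
    hYindep.integrable_exp_mul_sum hYmeas (fun i _ => hint i)
  have hcher := measure_le_le_exp_mul_mgf (μ := P) (X := ∑ j, Y j) (ε₁ * ε₂ / 2) ht0 hsumint
  have hsetEq : {ω | ∑ j, ps j * Xs j ω ≤ ε₁ * ε₂ / 2} =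
      {ω | (∑ j, Y j) ω ≤ ε₁ * ε₂ / 2} := by
    ext ω
    simp [hYdef, Finset.sum_apply]
  have hmgfsum : mgf (∑ j, Y j) P t = ∏ j, mgf (Y j) P t := hYindep.mgf_sum hYmeas Finset.univ
  have hprod : ∏ j, mgf (Y j) P t ≤
      ∏ j, Real.exp (ε₂ * (t * ps j * ε₁) + (t * ps j * ε₁) ^ 2 / 8) :=
    Finset.prod_le_prod (fun j _ => mgf_nonneg) (fun j _ => hmgf j)
  have hS2 : ∑ j, ps j ^ 2 ≤ m := by
    calc ∑ j, ps j ^ 2 ≤ ∑ j, m * ps j := by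
          refine Finset.sum_le_sum fun j _ => ?_
          rw [sq]
          exact mul_le_mul_of_nonneg_right (hpm j) (hps j)
      _ = m := by rw [← Finset.mul_sum, hsum, mul_one]
  have hexp : Real.exp (-t * (ε₁ * ε₂ / 2)) *
      ∏ j, Real.exp (ε₂ * (t * ps j * ε₁) + (t * ps j * ε₁) ^ 2 / 8) ≤
      Real.exp (-ε₂ ^ 2 / (2 * m)) := by
    rw [← Real.exp_sum, ← Real.exp_add, Real.exp_le_exp]
    have hsplit : ∑ j, (ε₂ * (t * ps j * ε₁) + (t * ps j * ε₁) ^ 2 / 8) =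
        ε₂ * t * ε₁ * (∑ j, ps j) + t ^ 2 * ε₁ ^ 2 / 8 * (∑ j, ps j ^ 2) := by
      rw [Finset.sum_add_distrib, Finset.mul_sum, Finset.mul_sum]
      congr 1 <;> exact Finset.sum_congr rfl fun j _ => by ring
    rw [hsplit, hsum, mul_one]
    have h8 : t ^ 2 * ε₁ ^ 2 / 8 * (∑ j, ps j ^ 2) ≤ t ^ 2 * ε₁ ^ 2 / 8 * m :=
      mul_le_mul_of_nonneg_left hS2 (by positivity)
    have heq : -t * (ε₁ * ε₂ / 2) + (ε₂ * t * ε₁ + t ^ 2 * ε₁ ^ 2 / 8 * m) =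
        -ε₂ ^ 2 / (2 * m) := by
      rw [htdef]
      field_simp
      ring
    linarith
  have hfinal : (P {ω | ∑ j, ps j * Xs j ω ≤ ε₁ * ε₂ / 2}).toReal ≤
      Real.exp (-ε₂ ^ 2 / (2 * m)) := by
    rw [hsetEq]
    calc (P {ω | (∑ j, Y j) ω ≤ ε₁ * ε₂ / 2}).toReal
        ≤ Real.exp (-t * (ε₁ * ε₂ / 2)) * mgf (∑ j, Y j) P t := hcher
      _ ≤ Real.exp (-t * (ε₁ * ε₂ / 2)) *
          ∏ j, Real.exp (ε₂ * (t * ps j * ε₁) + (t * ps j * ε₁) ^ 2 / 8) := by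
          rw [hmgfsum]
          exact mul_le_mul_of_nonneg_left hprod (Real.exp_pos _).le
      _ ≤ Real.exp (-ε₂ ^ 2 / (2 * m)) := hexp
  rw [← ENNReal.ofReal_toReal (measure_ne_top P _)]
  exact ENNReal.ofReal_le_ofReal hfinal
end

section
/- Let X be a positive random variable with E X = 1, E[X^p] ≤ C for some p > 1 and C > 0, and P(X ≥ ε₁) ≥ ε₂ for some ε₁ > 0 and ε₂ > 0. Let X₁,…,X_k be i.i.d. copies of X, let p₁,…,p_k ≥ 0 with Σ_{j=1}^k p_j = 1, and for L ≥ 1 write h_L(x) = x·1_{x ≥ L}. Then: (i) for every ε > 0 and every L ≥ 1, P( (Σ_j p_j h_L(X_j)) / (Σ_j p_j X_j) ≥ ε ) ≤ exp( −ε₂²/(2·max_j p_j) ) + 4C/(ε·ε₁·ε₂·L^{p−1}); and (ii) for every L ≥ 1, E[ (Σ_j p_j h_L(X_j)) / (Σ_j p_j X_j) ] ≤ exp( −ε₂²/(2·max_j p_j) ) + 4C/(ε₁·ε₂·L^{p−1}). -/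
open MeasureTheory ProbabilityTheory

section Helpers
open Real

lemma exp_sub_exp_neg_le {x : ℝ} (hx0 : 0 ≤ x) (hx : x ≤ 2/3) :
    Real.exp x - Real.exp (-x) ≤ 4 * x := by
  have h1 : 1 - x ≤ Real.exp (-x) := by
    have := Real.add_one_le_exp (-x); linarith
  have hx1 : (0:ℝ) < 1 - x := by linarith
  have h2 : Real.exp x ≤ 1 / (1 - x) := by
    rw [le_div_iff₀ hx1]
    have : Real.exp x * (1 - x) ≤ Real.exp x * Real.exp (-x) := by
      apply mul_le_mul_of_nonneg_left h1 (Real.exp_pos x).le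
    rwa [← Real.exp_add, add_neg_cancel, Real.exp_zero] at this
  have h3 : 1 / (1 - x) - (1 - x) ≤ 4 * x := by
    rw [div_sub' hx1.ne', div_le_iff₀ hx1]
    nlinarith
  linarith

lemma keyB {q s : ℝ} (hq0 : 0 ≤ q) (hq1 : q ≤ 1) (hs0 : 0 ≤ s) (hs1 : s ≤ 1) :
    q * (1 - q) * (1 - Real.exp (-s)) ≤ s / 2 * (1 - q + q * Real.exp (-s)) := by
  set u := Real.exp (-(s/2)) with hu
  have hu0 : 0 < u := Real.exp_pos _
  have hu1 : u ≤ 1 := by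
    rw [hu]; exact Real.exp_le_one_iff.mpr (by linarith)
  have huu : Real.exp (-s) = u ^ 2 := by
    rw [hu, ← Real.exp_nat_mul]; norm_num; ring_nf
  have h1q : (0:ℝ) ≤ 1 - q := by linarith
  have f1 : 1 - u ^ 2 ≤ 2 * s * u := by
    have h := exp_sub_exp_neg_le (x := s/2) (by linarith) (by linarith)
    have hinv : Real.exp (s/2) = 1 / u := by
      rw [eq_div_iff hu0.ne', hu, ← Real.exp_add]; norm_num
    rw [hinv] at h
    have := mul_le_mul_of_nonneg_right h hu0.le
    have h1u : 1 / u * u = 1 := by field_simp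
    nlinarith [sq_nonneg u]
  have f2 : 0 ≤ 1 - q + q * u ^ 2 - 4 * q * (1 - q) * u := by
    rcases eq_or_lt_of_le hq0 with h | h
    · simp [← h]
    · have key : 0 ≤ q * (1 - q + q * u ^ 2 - 4 * q * (1 - q) * u) := by
        nlinarith [sq_nonneg (q * u - 2 * q * (1 - q)), mul_nonneg (mul_nonneg hq0 h1q) (sq_nonneg (1 - 2*q))]
      exact nonneg_of_mul_nonneg_right key h
  rw [huu]
  calc q * (1 - q) * (1 - u ^ 2) ≤ q * (1 - q) * (2 * s * u) :=
        mul_le_mul_of_nonneg_left f1 (mul_nonneg hq0 h1q)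
    _ = s / 2 * (4 * q * (1 - q) * u) := by ring
    _ ≤ s / 2 * (1 - q + q * u ^ 2) := by
        apply mul_le_mul_of_nonneg_left (by linarith) (by linarith)

lemma mgfBound {q s : ℝ} (hq0 : 0 ≤ q) (hq1 : q ≤ 1) (hs0 : 0 ≤ s) (hs1 : s ≤ 1) :
    1 - q + q * Real.exp (-s) ≤ Real.exp (s^2/4 - q*s) := by
  have hD : ∀ x : ℝ, 0 < 1 - q + q * Real.exp (-x) := by
    intro x
    rcases eq_or_lt_of_le hq0 with h | h
    · rw [← h]; norm_num
    · have := Real.exp_pos (-x)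
      nlinarith
  set F : ℝ → ℝ := fun x => x^2/4 - q*x - Real.log (1 - q + q * Real.exp (-x)) with hF
  have hderiv : ∀ x : ℝ, HasDerivAt F (x/2 - q - (q * (Real.exp (-x) * (-1))) / (1 - q + q * Real.exp (-x))) x := by
    intro x
    have h0 : HasDerivAt (fun y : ℝ => -y) (-1) x := (hasDerivAt_id x).neg
    have h1 : HasDerivAt (fun y : ℝ => Real.exp (-y)) (Real.exp (-x) * (-1)) x :=
      (Real.hasDerivAt_exp (-x)).comp x h0
    have h2 : HasDerivAt (fun y : ℝ => 1 - q + q * Real.exp (-y)) (q * (Real.exp (-x) * (-1))) x :=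
      (h1.const_mul q).const_add (1 - q)
    have h3 : HasDerivAt (fun y : ℝ => Real.log (1 - q + q * Real.exp (-y)))
        ((q * (Real.exp (-x) * (-1))) / (1 - q + q * Real.exp (-x))) x := h2.log (hD x).ne'
    have h4 : HasDerivAt (fun y : ℝ => y^2/4 - q*y) (x/2 - q) x := by
      have := ((hasDerivAt_pow 2 x).div_const 4).sub ((hasDerivAt_id x).const_mul q)
      refine this.congr_deriv ?_
      push_cast; ring
    exact h4.sub h3
  have hmono : MonotoneOn F (Set.Icc 0 1) := by
    apply monotoneOn_of_deriv_nonneg (convex_Icc 0 1)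
    · exact fun x _ => ((hderiv x).differentiableAt).continuousAt.continuousWithinAt
    · exact fun x _ => ((hderiv x).differentiableAt).differentiableWithinAt
    · intro x hx
      rw [interior_Icc] at hx
      rw [(hderiv x).deriv]
      have hkey := keyB hq0 hq1 hx.1.le hx.2.le
      have hDx := hD x
      have expand : x/2 - q - (q * (Real.exp (-x) * (-1))) / (1 - q + q * Real.exp (-x))
          = (x / 2 * (1 - q + q * Real.exp (-x)) - q * (1 - q) * (1 - Real.exp (-x)))
            / (1 - q + q * Real.exp (-x)) := by
        field_simp
        ring
      rw [expand]
      exact div_nonneg (by linarith) hDx.le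
  have hF0 : F 0 = 0 := by simp [hF]
  have hFs : 0 ≤ F s := by
    rw [← hF0]
    exact hmono (Set.mem_Icc.mpr ⟨le_refl 0, zero_le_one⟩) (Set.mem_Icc.mpr ⟨hs0, hs1⟩) hs0
  have hlog : Real.log (1 - q + q * Real.exp (-s)) ≤ s^2/4 - q*s := by
    simp only [hF] at hFs; linarith
  calc 1 - q + q * Real.exp (-s) = Real.exp (Real.log (1 - q + q * Real.exp (-s))) :=
        (Real.exp_log (hD s)).symm
    _ ≤ Real.exp (s^2/4 - q*s) := Real.exp_le_exp.mpr hlog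

lemma concentration {Ω : Type*} [MeasurableSpace Ω] (P : Measure Ω) [IsProbabilityMeasure P]
    (k : ℕ) (Xs : Fin k → Ω → ℝ) (hmeas : ∀ j, Measurable (Xs j))
    (hIndep : iIndepFun Xs P)
    (ε₁ ε₂ : ℝ) (hε₂ : 0 < ε₂) (hε₂1 : ε₂ ≤ 1)
    (htail : ∀ j, P {ω | ε₁ ≤ Xs j ω} ≥ ENNReal.ofReal ε₂)
    (ps : Fin k → ℝ) (hps : ∀ j, 0 ≤ ps j) (hsum : ∑ j, ps j = 1)
    (M : ℝ) (hM : 0 < M) (hpM : ∀ j, ps j ≤ M) :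
    (P {ω | (∑ j, ps j * (if ε₁ ≤ Xs j ω then (1:ℝ) else 0)) ≤ ε₂/4}).toReal
      ≤ Real.exp (-ε₂^2 / (2*M)) := by
  classical
  set t : ℝ := ε₂ / M with hts
  have ht : 0 < t := div_pos hε₂ hM
  set g : Fin k → ℝ → ℝ := fun j x => ps j * (if ε₁ ≤ x then (1:ℝ) else 0) with hg
  have hgmeas : ∀ j, Measurable (g j) := fun j =>
    (Measurable.ite measurableSet_Ici measurable_const measurable_const).const_mul (ps j)
  set Z : Fin k → Ω → ℝ := fun j => (g j) ∘ (Xs j) with hZ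
  have hZmeas : ∀ j, Measurable (Z j) := fun j => (hgmeas j).comp (hmeas j)
  have hIndepZ : iIndepFun Z P := hIndep.comp g hgmeas
  set q : Fin k → ℝ := fun j => (P {ω | ε₁ ≤ Xs j ω}).toReal with hq
  have hq0 : ∀ j, 0 ≤ q j := fun j => ENNReal.toReal_nonneg
  have hq1 : ∀ j, q j ≤ 1 := fun j => by
    simpa using ENNReal.toReal_mono (by finiteness) (prob_le_one (μ := P) (s := {ω | ε₁ ≤ Xs j ω}))
  have hq2 : ∀ j, ε₂ ≤ q j := fun j => by
    have := ENNReal.toReal_mono (by finiteness) (htail j)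
    rwa [ENNReal.toReal_ofReal hε₂.le] at this
  have hAmeas : ∀ j, MeasurableSet {ω | ε₁ ≤ Xs j ω} := fun j => hmeas j measurableSet_Ici
  -- pointwise form of exp(-t Z j)
  have hptw : ∀ j, (fun ω => Real.exp ((-t) * Z j ω))
      = fun ω => {ω | ε₁ ≤ Xs j ω}.indicator (fun _ => Real.exp (-(t * ps j)) - 1) ω + 1 := by
    intro j
    funext ω
    by_cases h : ε₁ ≤ Xs j ω
    · simp only [hZ, hg, Function.comp_apply, if_pos h]
      rw [Set.indicator_of_mem (show ω ∈ {ω | ε₁ ≤ Xs j ω} from h), sub_add_cancel]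
      congr 1
      ring
    · simp only [hZ, hg, Function.comp_apply, if_neg h,
        Set.indicator_of_notMem (by exact h : ω ∉ {ω | ε₁ ≤ Xs j ω})]
      norm_num
  have hint : ∀ j, Integrable (fun ω => Real.exp ((-t) * Z j ω)) P := by
    intro j
    rw [hptw j]
    exact ((integrable_const _).indicator (hAmeas j)).add (integrable_const 1)
  have hmgf_eq : ∀ j, mgf (Z j) P (-t) = 1 - q j + q j * Real.exp (-(t * ps j)) := by
    intro j
    rw [mgf, hptw j, integral_add (((integrable_const _).indicator (hAmeas j))) (integrable_const 1),
      integral_indicator_const _ (hAmeas j), integral_const]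
    simp only [Measure.real, measure_univ, ENNReal.toReal_one, smul_eq_mul, one_mul]
    rw [hq]
    ring
  have hmgf_le : ∀ j, mgf (Z j) P (-t) ≤ Real.exp (t^2 * ps j * M / 4 - ε₂ * t * ps j) := by
    intro j
    rw [hmgf_eq j]
    have hs0 : 0 ≤ t * ps j := mul_nonneg ht.le (hps j)
    have hs1 : t * ps j ≤ 1 := by
      rw [hts]
      calc ε₂ / M * ps j ≤ ε₂ / M * M := by
            apply mul_le_mul_of_nonneg_left (hpM j) (div_pos hε₂ hM).le
        _ = ε₂ := by field_simp
        _ ≤ 1 := hε₂1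
    calc 1 - q j + q j * Real.exp (-(t * ps j))
        ≤ Real.exp ((t * ps j)^2/4 - q j * (t * ps j)) := mgfBound (hq0 j) (hq1 j) hs0 hs1
      _ ≤ Real.exp (t^2 * ps j * M / 4 - ε₂ * t * ps j) := by
          apply Real.exp_le_exp.mpr
          have h1 : (t * ps j)^2 ≤ t^2 * ps j * M := by
            have : (t * ps j)^2 = t^2 * ps j * ps j := by ring
            rw [this]
            apply mul_le_mul_of_nonneg_left (hpM j) (mul_nonneg (sq_nonneg t) (hps j))
          have h2 : ε₂ * (t * ps j) ≤ q j * (t * ps j) :=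
            mul_le_mul_of_nonneg_right (hq2 j) hs0
          nlinarith
  have hT_int : Integrable (fun ω => Real.exp ((-t) * (∑ j, Z j) ω)) P :=
    hIndepZ.integrable_exp_mul_sum hZmeas (fun j _ => hint j)
  have hchern := measure_le_le_exp_mul_mgf (μ := P) (X := ∑ j, Z j) (ε₂/4)
    (t := -t) (by linarith) hT_int
  have hmgf_sum : mgf (∑ j, Z j) P (-t) = ∏ j, mgf (Z j) P (-t) :=
    hIndepZ.mgf_sum hZmeas Finset.univ
  have hprod : ∏ j, mgf (Z j) P (-t) ≤ Real.exp (t^2 * M / 4 - ε₂ * t) := by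
    calc ∏ j, mgf (Z j) P (-t)
        ≤ ∏ j, Real.exp (t^2 * ps j * M / 4 - ε₂ * t * ps j) :=
          Finset.prod_le_prod (fun j _ => mgf_nonneg) (fun j _ => hmgf_le j)
      _ = Real.exp (∑ j, (t^2 * ps j * M / 4 - ε₂ * t * ps j)) := by
          rw [Real.exp_sum]
      _ = Real.exp (t^2 * M / 4 - ε₂ * t) := by
          congr 1
          have : ∀ j, t^2 * ps j * M / 4 - ε₂ * t * ps j = (t^2 * M / 4 - ε₂ * t) * ps j := by
            intro j; ring
          simp_rw [this]
          rw [← Finset.mul_sum, hsum, mul_one]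
  have hset : {ω | (∑ j, ps j * (if ε₁ ≤ Xs j ω then (1:ℝ) else 0)) ≤ ε₂/4}
      = {ω | (∑ j, Z j) ω ≤ ε₂/4} := by
    ext ω
    simp [Finset.sum_apply, hZ, hg]
  rw [hset]
  calc (P {ω | (∑ j, Z j) ω ≤ ε₂/4}).toReal
      ≤ Real.exp (-(-t) * (ε₂/4)) * mgf (∑ j, Z j) P (-t) := hchern
    _ ≤ Real.exp (t * (ε₂/4)) * Real.exp (t^2 * M / 4 - ε₂ * t) := by
        rw [neg_neg, hmgf_sum]
        exact mul_le_mul_of_nonneg_left hprod (Real.exp_pos _).le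
    _ = Real.exp (t * (ε₂/4) + (t^2 * M / 4 - ε₂ * t)) := by rw [← Real.exp_add]
    _ = Real.exp (-ε₂^2 / (2*M)) := by
        congr 1
        rw [hts]
        field_simp
        ring

lemma numBound {Ω : Type*} [MeasurableSpace Ω] (P : Measure Ω) [IsProbabilityMeasure P]
    (k : ℕ) (Xs : Fin k → Ω → ℝ) (hmeas : ∀ j, Measurable (Xs j))
    (p : ℝ) (hp : 1 < p) (C : ℝ)
    (hmom : ∀ j, ∫⁻ ω, ENNReal.ofReal (Xs j ω ^ p) ∂P ≤ ENNReal.ofReal C)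
    (ps : Fin k → ℝ) (hps : ∀ j, 0 ≤ ps j) (hsum : ∑ j, ps j = 1)
    (L : ℝ) (hL : 1 ≤ L) :
    ∫⁻ ω, ENNReal.ofReal (∑ j, ps j * (if L ≤ Xs j ω then Xs j ω else 0)) ∂P
      ≤ ENNReal.ofReal (C / L^(p-1)) := by
  classical
  have hL0 : (0:ℝ) < L := by linarith
  have hLp : (0:ℝ) < L ^ (p-1) := Real.rpow_pos_of_pos hL0 _
  have hite_nonneg : ∀ j ω, 0 ≤ (if L ≤ Xs j ω then Xs j ω else 0) := by
    intro j ω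
    split
    · linarith
    · exact le_refl _
  have hhmeas : ∀ j, Measurable (fun ω => (if L ≤ Xs j ω then Xs j ω else 0)) := by
    intro j
    exact Measurable.ite ((hmeas j) measurableSet_Ici) (hmeas j) measurable_const
  have hterm : ∀ j ω, ENNReal.ofReal (if L ≤ Xs j ω then Xs j ω else 0) * ENNReal.ofReal (L^(p-1))
      ≤ ENNReal.ofReal (Xs j ω ^ p) := by
    intro j ω
    by_cases h : L ≤ Xs j ω
    · rw [if_pos h, ← ENNReal.ofReal_mul (by linarith)]
      apply ENNReal.ofReal_le_ofReal
      have hx : (0:ℝ) < Xs j ω := by linarith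
      have hxp : Xs j ω ^ p = Xs j ω * Xs j ω ^ (p-1) := by
        rw [show p = 1 + (p-1) by ring, Real.rpow_add hx, Real.rpow_one]
        ring_nf
      rw [hxp]
      apply mul_le_mul_of_nonneg_left _ hx.le
      exact Real.rpow_le_rpow hL0.le h (by linarith)
    · rw [if_neg h]
      simp
  have hper : ∀ j, ∫⁻ ω, ENNReal.ofReal (if L ≤ Xs j ω then Xs j ω else 0) ∂P
      ≤ ENNReal.ofReal (C / L^(p-1)) := by
    intro j
    rw [ENNReal.ofReal_div_of_pos hLp]
    rw [ENNReal.le_div_iff_mul_le (Or.inl (by simp [ENNReal.ofReal_pos.mpr hLp, ne_of_gt]))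
      (Or.inl ENNReal.ofReal_ne_top)]
    calc (∫⁻ ω, ENNReal.ofReal (if L ≤ Xs j ω then Xs j ω else 0) ∂P) * ENNReal.ofReal (L^(p-1))
        = ∫⁻ ω, ENNReal.ofReal (if L ≤ Xs j ω then Xs j ω else 0) * ENNReal.ofReal (L^(p-1)) ∂P :=
          (lintegral_mul_const _ ((hhmeas j).ennreal_ofReal)).symm
      _ ≤ ∫⁻ ω, ENNReal.ofReal (Xs j ω ^ p) ∂P := lintegral_mono (fun ω => hterm j ω)
      _ ≤ ENNReal.ofReal C := hmom j
  calc ∫⁻ ω, ENNReal.ofReal (∑ j, ps j * (if L ≤ Xs j ω then Xs j ω else 0)) ∂P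
      = ∫⁻ ω, ∑ j, ENNReal.ofReal (ps j * (if L ≤ Xs j ω then Xs j ω else 0)) ∂P := by
        congr 1
        funext ω
        exact ENNReal.ofReal_sum_of_nonneg (fun j _ => mul_nonneg (hps j) (hite_nonneg j ω))
    _ = ∑ j, ∫⁻ ω, ENNReal.ofReal (ps j * (if L ≤ Xs j ω then Xs j ω else 0)) ∂P := by
        apply lintegral_finset_sum
        intro j _
        exact ((hhmeas j).const_mul (ps j)).ennreal_ofReal
    _ = ∑ j, ENNReal.ofReal (ps j) * ∫⁻ ω, ENNReal.ofReal (if L ≤ Xs j ω then Xs j ω else 0) ∂P := by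
        congr 1
        funext j
        rw [← lintegral_const_mul _ ((hhmeas j).ennreal_ofReal)]
        congr 1
        funext ω
        rw [← ENNReal.ofReal_mul (hps j)]
    _ ≤ ∑ j, ENNReal.ofReal (ps j) * ENNReal.ofReal (C / L^(p-1)) := by
        apply Finset.sum_le_sum
        intro j _
        exact mul_le_mul_of_nonneg_left (hper j) zero_le
    _ = ENNReal.ofReal (C / L^(p-1)) := by
        rw [← Finset.sum_mul, ← ENNReal.ofReal_sum_of_nonneg (fun j _ => hps j), hsum,
          ENNReal.ofReal_one, one_mul]

end Helpers

/-- For i.i.d. positive random variables with mean one, a `p`-th moment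
bound and an anti-concentration bound, the relative contribution of the large terms
`h_L(X_j) = X_j 1_{X_j ≥ L}` to a weighted average is small, both with high probability
and in expectation. -/
theorem weighted_large_part_contribution
    {Ω : Type*} [MeasurableSpace Ω] (P : Measure Ω) [IsProbabilityMeasure P]
    (k : ℕ) (hk : 0 < k)
    (Xs : Fin k → Ω → ℝ) (hmeas : ∀ j, Measurable (Xs j))
    (hpos : ∀ j, ∀ᵐ ω ∂P, 0 < Xs j ω)
    (hIndep : iIndepFun Xs P)
    (hIdent : ∀ i j, P.map (Xs i) = P.map (Xs j))
    (hint : ∀ j, Integrable (Xs j) P) (hmean : ∀ j, ∫ ω, Xs j ω ∂P = 1)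
    (p : ℝ) (hp : 1 < p) (C : ℝ) (hC : 0 < C)
    (hmom : ∀ j, ∫⁻ ω, ENNReal.ofReal (Xs j ω ^ p) ∂P ≤ ENNReal.ofReal C)
    (ε₁ ε₂ : ℝ) (hε₁ : 0 < ε₁) (hε₂ : 0 < ε₂)
    (htail : ∀ j, P {ω | ε₁ ≤ Xs j ω} ≥ ENNReal.ofReal ε₂)
    (ps : Fin k → ℝ) (hps : ∀ j, 0 ≤ ps j) (hsum : ∑ j, ps j = 1) :
    (∀ ε : ℝ, 0 < ε → ∀ L : ℝ, 1 ≤ L →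
      P {ω | ε ≤ (∑ j, ps j * (if L ≤ Xs j ω then Xs j ω else 0)) / (∑ j, ps j * Xs j ω)}
        ≤ ENNReal.ofReal
            (Real.exp (-ε₂ ^ 2 / (2 * Finset.univ.sup' ⟨⟨0, hk⟩, Finset.mem_univ _⟩ ps))
              + 4 * C / (ε * ε₁ * ε₂ * L ^ (p - 1)))) ∧
    (∀ L : ℝ, 1 ≤ L →
      ∫ ω, (∑ j, ps j * (if L ≤ Xs j ω then Xs j ω else 0)) / (∑ j, ps j * Xs j ω) ∂P
        ≤ Real.exp (-ε₂ ^ 2 / (2 * Finset.univ.sup' ⟨⟨0, hk⟩, Finset.mem_univ _⟩ ps))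
            + 4 * C / (ε₁ * ε₂ * L ^ (p - 1))) := by
  classical
  set M : ℝ := Finset.univ.sup' ⟨⟨0, hk⟩, Finset.mem_univ _⟩ ps with hMdef
  have hpM : ∀ j, ps j ≤ M := fun j => Finset.le_sup' ps (Finset.mem_univ j)
  have hM : 0 < M := by
    by_contra h
    push_neg at h
    have : ∀ j, ps j = 0 := fun j => le_antisymm (le_trans (hpM j) h) (hps j)
    rw [Finset.sum_congr rfl (fun j _ => this j)] at hsum
    simp at hsum
  have hε₂1 : ε₂ ≤ 1 :=
    ENNReal.ofReal_le_one.mp (le_trans (htail ⟨0, hk⟩) prob_le_one)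
  -- indicator sum T
  set T : Ω → ℝ := fun ω => ∑ j, ps j * (if ε₁ ≤ Xs j ω then (1:ℝ) else 0) with hTdef
  have hTmeas : Measurable T := by
    apply Finset.measurable_sum
    intro j _
    exact (Measurable.ite ((hmeas j) measurableSet_Ici) measurable_const measurable_const).const_mul _
  set S : Ω → ℝ := fun ω => ∑ j, ps j * Xs j ω with hSdef
  have hSmeas : Measurable S := by
    apply Finset.measurable_sum
    intro j _
    exact (hmeas j).const_mul _
  have hG : ∀ᵐ ω ∂P, ∀ j, 0 < Xs j ω := ae_all_iff.mpr hpos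
  obtain ⟨j₀, hj₀⟩ : ∃ j, 0 < ps j := by
    by_contra h
    push_neg at h
    have : ∀ j, ps j = 0 := fun j => le_antisymm (h j) (hps j)
    rw [Finset.sum_congr rfl (fun j _ => this j)] at hsum
    simp at hsum
  have hSpos : ∀ ω, (∀ j, 0 < Xs j ω) → 0 < S ω := by
    intro ω hω
    calc (0:ℝ) < ps j₀ * Xs j₀ ω := mul_pos hj₀ (hω j₀)
      _ ≤ S ω := Finset.single_le_sum
          (fun j _ => mul_nonneg (hps j) (hω j).le) (Finset.mem_univ j₀)
  have hST : ∀ ω, (∀ j, 0 < Xs j ω) → ε₁ * T ω ≤ S ω := by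
    intro ω hω
    rw [hTdef, Finset.mul_sum]
    apply Finset.sum_le_sum
    intro j _
    by_cases h : ε₁ ≤ Xs j ω
    · rw [if_pos h, mul_one, mul_comm ε₁ (ps j)]
      exact mul_le_mul_of_nonneg_left h (hps j)
    · rw [if_neg h, mul_zero, mul_zero]
      exact mul_nonneg (hps j) (hω j).le
  have hconc : (P {ω | T ω ≤ ε₂/4}).toReal ≤ Real.exp (-ε₂^2 / (2*M)) :=
    concentration P k Xs hmeas hIndep ε₁ ε₂ hε₂ hε₂1 htail ps hps hsum M hM hpM
  have hbadmeas : MeasurableSet {ω | T ω ≤ ε₂/4} := hTmeas measurableSet_Iic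
  have hconc' : P {ω | T ω ≤ ε₂/4} ≤ ENNReal.ofReal (Real.exp (-ε₂^2 / (2*M))) :=
    (ENNReal.le_ofReal_iff_toReal_le (measure_ne_top P _) (Real.exp_nonneg _)).mpr hconc
  have hLp : ∀ L : ℝ, 1 ≤ L → (0:ℝ) < L ^ (p-1) := fun L hL =>
    Real.rpow_pos_of_pos (by linarith) _
  have hN0 : ∀ (L : ℝ), 1 ≤ L → ∀ ω, 0 ≤ ∑ j, ps j * (if L ≤ Xs j ω then Xs j ω else 0) := by
    intro L hL ω
    apply Finset.sum_nonneg
    intro j _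
    apply mul_nonneg (hps j)
    split
    · linarith
    · exact le_refl 0
  have hNmeas : ∀ L : ℝ, Measurable (fun ω => ∑ j, ps j * (if L ≤ Xs j ω then Xs j ω else 0)) := by
    intro L
    apply Finset.measurable_sum
    intro j _
    exact (Measurable.ite ((hmeas j) measurableSet_Ici) (hmeas j) measurable_const).const_mul _
  have hNS : ∀ (L : ℝ) ω, (∀ j, 0 < Xs j ω) →
      (∑ j, ps j * (if L ≤ Xs j ω then Xs j ω else 0)) ≤ S ω := by
    intro L ω hω
    apply Finset.sum_le_sum
    intro j _
    apply mul_le_mul_of_nonneg_left _ (hps j)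
    split
    · exact le_refl _
    · exact (hω j).le
  constructor
  · -- part (i)
    intro ε hε L hL
    set N : Ω → ℝ := fun ω => ∑ j, ps j * (if L ≤ Xs j ω then Xs j ω else 0) with hNdef
    have hη : (0:ℝ) < ε * ε₁ * ε₂ / 4 := by positivity
    have hsub : P {ω | ε ≤ N ω / S ω}
        ≤ P ({ω | T ω ≤ ε₂/4} ∪ {ω | ε * ε₁ * ε₂ / 4 ≤ N ω}) := by
      apply measure_mono_ae
      filter_upwards [hG] with ω hωG hωA
      by_cases hT : T ω ≤ ε₂/4
      · exact Set.mem_union_left _ hT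
      · apply Set.mem_union_right
        push_neg at hT
        have hS4 : ε₁ * ε₂ / 4 ≤ S ω := by
          have := hST ω hωG
          nlinarith
        have hSp : 0 < S ω := lt_of_lt_of_le (by positivity) hS4
        have hNge : ε * S ω ≤ N ω := (le_div_iff₀ hSp).mp hωA
        calc ε * ε₁ * ε₂ / 4 = ε * (ε₁ * ε₂ / 4) := by ring
          _ ≤ ε * S ω := mul_le_mul_of_nonneg_left hS4 hε.le
          _ ≤ N ω := hNge
    have hbad2 : P {ω | ε * ε₁ * ε₂ / 4 ≤ N ω}
        ≤ ENNReal.ofReal (4 * C / (ε * ε₁ * ε₂ * L ^ (p-1))) := by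
      have hseteq : {ω | ε * ε₁ * ε₂ / 4 ≤ N ω}
          = {ω | ENNReal.ofReal (ε * ε₁ * ε₂ / 4) ≤ ENNReal.ofReal (N ω)} := by
        ext ω
        simp only [Set.mem_setOf_eq]
        exact (ENNReal.ofReal_le_ofReal_iff (hN0 L hL ω)).symm
      rw [hseteq]
      calc P {ω | ENNReal.ofReal (ε * ε₁ * ε₂ / 4) ≤ ENNReal.ofReal (N ω)}
          ≤ (∫⁻ ω, ENNReal.ofReal (N ω) ∂P) / ENNReal.ofReal (ε * ε₁ * ε₂ / 4) :=
            meas_ge_le_lintegral_div ((hNmeas L).ennreal_ofReal.aemeasurable)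
              (by simp [ENNReal.ofReal_pos.mpr hη, ne_of_gt]) ENNReal.ofReal_ne_top
        _ ≤ ENNReal.ofReal (C / L^(p-1)) / ENNReal.ofReal (ε * ε₁ * ε₂ / 4) := by
            apply ENNReal.div_le_div_right
            exact numBound P k Xs hmeas p hp C hmom ps hps hsum L hL
        _ = ENNReal.ofReal ((C / L^(p-1)) / (ε * ε₁ * ε₂ / 4)) :=
            (ENNReal.ofReal_div_of_pos hη).symm
        _ = ENNReal.ofReal (4 * C / (ε * ε₁ * ε₂ * L ^ (p-1))) := by
            congr 1
            have h1 := hLp L hL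
            field_simp
    calc P {ω | ε ≤ N ω / S ω}
        ≤ P ({ω | T ω ≤ ε₂/4} ∪ {ω | ε * ε₁ * ε₂ / 4 ≤ N ω}) := hsub
      _ ≤ P {ω | T ω ≤ ε₂/4} + P {ω | ε * ε₁ * ε₂ / 4 ≤ N ω} := measure_union_le _ _
      _ ≤ ENNReal.ofReal (Real.exp (-ε₂^2 / (2*M)))
          + ENNReal.ofReal (4 * C / (ε * ε₁ * ε₂ * L ^ (p-1))) := add_le_add hconc' hbad2
      _ = ENNReal.ofReal (Real.exp (-ε₂^2 / (2*M)) + 4 * C / (ε * ε₁ * ε₂ * L ^ (p-1))) := by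
          rw [← ENNReal.ofReal_add (Real.exp_nonneg _)]
          positivity
  · -- part (ii)
    intro L hL
    set N : Ω → ℝ := fun ω => ∑ j, ps j * (if L ≤ Xs j ω then Xs j ω else 0) with hNdef
    have hNint : Integrable N P := by
      apply integrable_finset_sum
      intro j _
      apply Integrable.const_mul
      apply Integrable.mono' (hint j).abs
        (Measurable.ite ((hmeas j) measurableSet_Ici) (hmeas j) measurable_const).aestronglyMeasurable
      apply Filter.Eventually.of_forall
      intro ω
      rw [Real.norm_eq_abs]
      split
      · exact le_refl _
      · simp [abs_nonneg]
    have hNle : ∫ ω, N ω ∂P ≤ C / L^(p-1) := by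
      have heq : ∫ ω, N ω ∂P = (∫⁻ ω, ENNReal.ofReal (N ω) ∂P).toReal := by
        rw [integral_eq_lintegral_of_nonneg_ae (Filter.Eventually.of_forall (hN0 L hL))
          (hNmeas L).aestronglyMeasurable]
      rw [heq]
      exact ENNReal.toReal_le_of_le_ofReal
        (div_nonneg hC.le (hLp L hL).le)
        (numBound P k Xs hmeas p hp C hmom ps hps hsum L hL)
    set R : Ω → ℝ := fun ω => N ω / S ω with hRdef
    have hRmeas : Measurable R := (hNmeas L).div hSmeas
    have hRbd : ∀ᵐ ω ∂P, ‖R ω‖ ≤ 1 := by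
      filter_upwards [hG] with ω hωG
      rw [Real.norm_eq_abs, abs_le]
      constructor
      · have := div_nonneg (hN0 L hL ω) (hSpos ω hωG).le
        linarith
      · exact (div_le_one (hSpos ω hωG)).mpr (hNS L ω hωG)
    have hRint : Integrable R P :=
      Integrable.mono' (integrable_const 1) hRmeas.aestronglyMeasurable hRbd
    set gbd : Ω → ℝ := fun ω =>
      Set.indicator {ω | T ω ≤ ε₂/4} (fun _ => (1:ℝ)) ω + (4/(ε₁*ε₂)) * N ω with hgbddef
    have hgint : Integrable gbd P :=
      (((integrable_const (1:ℝ)).indicator hbadmeas)).add (hNint.const_mul _)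
    have hRle : R ≤ᵐ[P] gbd := by
      filter_upwards [hG] with ω hωG
      by_cases hT : T ω ≤ ε₂/4
      · have h1 : Set.indicator {ω | T ω ≤ ε₂/4} (fun _ => (1:ℝ)) ω = 1 :=
          Set.indicator_of_mem (show ω ∈ {ω | T ω ≤ ε₂/4} from hT) _
        have h2 : R ω ≤ 1 := (div_le_one (hSpos ω hωG)).mpr (hNS L ω hωG)
        have h3 : 0 ≤ (4/(ε₁*ε₂)) * N ω :=
          mul_nonneg (by positivity) (hN0 L hL ω)
        show R ω ≤ _ + _
        rw [h1]
        linarith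
      · have h1 : Set.indicator {ω | T ω ≤ ε₂/4} (fun _ => (1:ℝ)) ω = 0 :=
          Set.indicator_of_notMem (show ω ∉ {ω | T ω ≤ ε₂/4} from hT) _
        push_neg at hT
        have hS4 : ε₁ * ε₂ / 4 ≤ S ω := by
          have := hST ω hωG
          nlinarith
        have hS40 : (0:ℝ) < ε₁ * ε₂ / 4 := by positivity
        have h2 : R ω ≤ N ω / (ε₁ * ε₂ / 4) :=
          div_le_div_of_nonneg_left (hN0 L hL ω) hS40 hS4
        have h3 : N ω / (ε₁ * ε₂ / 4) = (4/(ε₁*ε₂)) * N ω := by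
          field_simp
        show R ω ≤ _ + _
        rw [h1, zero_add]
        rw [h3] at h2
        exact h2
    calc ∫ ω, R ω ∂P ≤ ∫ ω, gbd ω ∂P := integral_mono_ae hRint hgint hRle
      _ = (P {ω | T ω ≤ ε₂/4}).toReal * 1 + (4/(ε₁*ε₂)) * ∫ ω, N ω ∂P := by
          rw [hgbddef]
          rw [integral_add ((integrable_const (1:ℝ)).indicator hbadmeas) (hNint.const_mul _)]
          rw [integral_indicator_const _ hbadmeas, integral_const_mul, smul_eq_mul, Measure.real]
      _ ≤ Real.exp (-ε₂^2 / (2*M)) + (4/(ε₁*ε₂)) * (C / L^(p-1)) := by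
          apply add_le_add
          · rw [mul_one]; exact hconc
          · exact mul_le_mul_of_nonneg_left hNle (by positivity)
      _ = Real.exp (-ε₂^2 / (2*M)) + 4 * C / (ε₁ * ε₂ * L^(p-1)) := by
          congr 1
          have := hLp L hL
          field_simp
end
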